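/- arXiv:1408.3590 — 3 statements merged into one kernel-verified Lean document; each statement's English description precedes it below -/
import Mathlib

section
/- For a kernel W and a partition P of [0,1] into t classes, the cut-P-norm of W equals the maximum over all sign matrices A ∈ {-1,+1}^{t×t} of the cut norm of W^A, where W^A(x,y) = A_{j,l} W(x,y) for x ∈ P_j, y ∈ P_l. -/
open MeasureTheory Set

noncomputable section

abbrev I01 : Set ℝ := Set.Icc 0 1

def IsKernel (W : ℝ → ℝ → ℝ) : Prop :=
  Measurable (Function.uncurry W) ∧ ∃ C, ∀ x y, |W x y| ≤ C

def IsPartition {ι : Type*} [Fintype ι] (P : ι → Set ℝ) : Prop :=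
  (∀ i, MeasurableSet (P i)) ∧ (∀ i, P i ⊆ I01) ∧
  (Pairwise fun i j => Disjoint (P i) (P j)) ∧ (⋃ i, P i) = I01

def cutNorm (W : ℝ → ℝ → ℝ) : ℝ :=
  sSup { r | ∃ S T : Set ℝ, MeasurableSet S ∧ MeasurableSet T ∧ S ⊆ I01 ∧ T ⊆ I01 ∧
    r = |∫ x in S, ∫ y in T, W x y| }

def cutPNorm {ι : Type*} [Fintype ι] (P : ι → Set ℝ) (W : ℝ → ℝ → ℝ) : ℝ :=
  sSup { r | ∃ S T : ι → Set ℝ,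
    (∀ i, MeasurableSet (S i) ∧ MeasurableSet (T i) ∧ S i ⊆ P i ∧ T i ⊆ P i) ∧
    r = ∑ i, ∑ j, |∫ x in S i, ∫ y in T j, W x y| }

def l1Norm (W : ℝ → ℝ → ℝ) : ℝ := ∫ x in I01, ∫ y in I01, |W x y|

def l2sq (W : ℝ → ℝ → ℝ) : ℝ := ∫ x in I01, ∫ y in I01, (W x y)^2

def avgP {ι : Type*} [Fintype ι] (P : ι → Set ℝ) (W : ℝ → ℝ → ℝ) : ℝ → ℝ → ℝ :=
  fun x y => ∑ i, ∑ j, (P i).indicator (fun _ => (1:ℝ)) x * (P j).indicator (fun _ => (1:ℝ)) y *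
    ((∫ u in P i, ∫ v in P j, W u v) / (volume (P i)).toReal / (volume (P j)).toReal)


section Aux

variable {W : ℝ → ℝ → ℝ} {C : ℝ}

lemma vol_le_one {S : Set ℝ} (hS : S ⊆ I01) : volume S ≤ 1 := by
  have := measure_mono (μ := (volume : Measure ℝ)) hS
  simpa [Real.volume_Icc] using this

lemma vol_lt_top {S : Set ℝ} (hS : S ⊆ I01) : volume S < ⊤ :=
  lt_of_le_of_lt (vol_le_one hS) ENNReal.one_lt_top

lemma toReal_vol_le_one {S : Set ℝ} (hS : S ⊆ I01) : (volume S).toReal ≤ 1 := by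
  calc (volume S).toReal ≤ (1 : ENNReal).toReal :=
        ENNReal.toReal_mono ENNReal.one_ne_top (vol_le_one hS)
    _ = 1 := ENNReal.toReal_one

lemma isFinite_restrict {S : Set ℝ} (hS : S ⊆ I01) : IsFiniteMeasure (volume.restrict S) :=
  ⟨by rw [Measure.restrict_apply_univ]; exact vol_lt_top hS⟩

lemma integrableOn_of_bdd {f : ℝ → ℝ} {D : ℝ} {S : Set ℝ} (hS : S ⊆ I01)
    (hf : AEStronglyMeasurable f (volume.restrict S)) (hb : ∀ x, |f x| ≤ D) :
    IntegrableOn f S := by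
  haveI := isFinite_restrict hS
  exact ⟨hf, HasFiniteIntegral.of_bounded (C := D)
    (Filter.Eventually.of_forall fun x => by rw [Real.norm_eq_abs]; exact hb x)⟩

lemma intOn (hWm : Measurable (Function.uncurry W)) (hC : ∀ x y, |W x y| ≤ C)
    (x : ℝ) {T : Set ℝ} (hT : T ⊆ I01) : IntegrableOn (W x) T :=
  integrableOn_of_bdd hT (hWm.of_uncurry_left).aestronglyMeasurable (hC x)

lemma g_meas (hWm : Measurable (Function.uncurry W)) (V : Set ℝ) :
    StronglyMeasurable fun x => ∫ y in V, W x y :=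
  hWm.stronglyMeasurable.integral_prod_right'

lemma g_bound (hC : ∀ x y, |W x y| ≤ C) (hCnn : 0 ≤ C) {V : Set ℝ}
    (hVm : MeasurableSet V) (hV : V ⊆ I01) (x : ℝ) : |∫ y in V, W x y| ≤ C := by
  have h := norm_setIntegral_le_of_norm_le_const (μ := volume) (f := W x) (vol_lt_top hV)
    (fun y _ => by rw [Real.norm_eq_abs]; exact hC x y)
  rw [Real.norm_eq_abs] at h
  calc |∫ y in V, W x y| ≤ C * (volume V).toReal := h
    _ ≤ C * 1 := mul_le_mul_of_nonneg_left (toReal_vol_le_one hV) hCnn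
    _ = C := mul_one C

lemma double_bound (hC : ∀ x y, |W x y| ≤ C) (hCnn : 0 ≤ C) {U V : Set ℝ}
    (hUm : MeasurableSet U) (hU : U ⊆ I01) (hVm : MeasurableSet V) (hV : V ⊆ I01) :
    |∫ x in U, ∫ y in V, W x y| ≤ C := by
  have h := norm_setIntegral_le_of_norm_le_const (μ := volume)
    (f := fun x => ∫ y in V, W x y) (vol_lt_top hU)
    (fun x _ => by rw [Real.norm_eq_abs]; exact g_bound hC hCnn hVm hV x)
  rw [Real.norm_eq_abs] at h
  calc |∫ x in U, ∫ y in V, W x y| ≤ C * (volume U).toReal := h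
    _ ≤ C * 1 := mul_le_mul_of_nonneg_left (toReal_vol_le_one hU) hCnn
    _ = C := mul_one C


lemma core (hWm : Measurable (Function.uncurry W)) (hC : ∀ x y, |W x y| ≤ C) (hCnn : 0 ≤ C)
    {t : ℕ} {P : Fin t → Set ℝ} (hPm : ∀ i, MeasurableSet (P i)) (hPs : ∀ i, P i ⊆ I01)
    (A : Fin t → Fin t → ℝ)
    {S T : Set ℝ} (hSm : MeasurableSet S) (hTm : MeasurableSet T) (hS : S ⊆ I01) (hT : T ⊆ I01) :
    ∫ x in S, ∫ y in T, (∑ j, ∑ l, (P j).indicator (fun _ => (1:ℝ)) x *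
        (P l).indicator (fun _ => (1:ℝ)) y * A j l) * W x y
      = ∑ j, ∑ l, A j l * ∫ x in S ∩ P j, ∫ y in T ∩ P l, W x y := by
  have hpt : ∀ x y, (∑ j, ∑ l, (P j).indicator (fun _ => (1:ℝ)) x *
        (P l).indicator (fun _ => (1:ℝ)) y * A j l) * W x y
      = ∑ j, ∑ l, (P j).indicator (fun _ => (1:ℝ)) x *
          (A j l * (P l).indicator (fun z => W x z) y) := by
    intro x y
    rw [Finset.sum_mul]
    refine Finset.sum_congr rfl fun j _ => ?_
    rw [Finset.sum_mul]
    refine Finset.sum_congr rfl fun l _ => ?_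
    by_cases hy : y ∈ P l
    · simp only [Set.indicator_of_mem hy]; ring
    · simp [Set.indicator_of_notMem hy]
  have intf : ∀ x, ∀ (j l : Fin t), Integrable (fun y => (P j).indicator (fun _ => (1:ℝ)) x *
      (A j l * (P l).indicator (fun z => W x z) y)) (volume.restrict T) := by
    intro x j l
    exact (((intOn hWm hC x hT).indicator (hPm l)).const_mul _).const_mul _
  have inner : ∀ x, (∫ y in T, (∑ j, ∑ l, (P j).indicator (fun _ => (1:ℝ)) x *
        (P l).indicator (fun _ => (1:ℝ)) y * A j l) * W x y)
      = ∑ j, ∑ l, (P j).indicator (fun _ => (1:ℝ)) x * (A j l * ∫ y in T ∩ P l, W x y) := by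
    intro x
    have h1 : (∫ y in T, (∑ j, ∑ l, (P j).indicator (fun _ => (1:ℝ)) x *
        (P l).indicator (fun _ => (1:ℝ)) y * A j l) * W x y)
        = ∫ y in T, ∑ j, ∑ l, (P j).indicator (fun _ => (1:ℝ)) x *
          (A j l * (P l).indicator (fun z => W x z) y) :=
      integral_congr_ae (Filter.Eventually.of_forall (hpt x))
    rw [h1, integral_finset_sum _ (fun j _ => integrable_finset_sum _ (fun l _ => intf x j l))]
    refine Finset.sum_congr rfl fun j _ => ?_
    rw [integral_finset_sum _ (fun l _ => intf x j l)]
    refine Finset.sum_congr rfl fun l _ => ?_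
    rw [integral_const_mul, integral_const_mul, setIntegral_indicator (hPm l)]
  have h2 : (∫ x in S, ∫ y in T, (∑ j, ∑ l, (P j).indicator (fun _ => (1:ℝ)) x *
        (P l).indicator (fun _ => (1:ℝ)) y * A j l) * W x y)
      = ∫ x in S, ∑ j, ∑ l, (P j).indicator (fun _ => (1:ℝ)) x *
          (A j l * ∫ y in T ∩ P l, W x y) :=
    integral_congr_ae (Filter.Eventually.of_forall inner)
  have intg : ∀ (j l : Fin t), IntegrableOn (fun x => (P j).indicator (fun _ => (1:ℝ)) x *
      (A j l * ∫ y in T ∩ P l, W x y)) S := by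
    intro j l
    refine integrableOn_of_bdd (D := 1 * (|A j l| * C)) hS ?_ ?_
    · exact ((measurable_const.indicator (hPm j)).mul
        (((g_meas hWm (T ∩ P l)).measurable).const_mul _)).aestronglyMeasurable
    · intro x
      have hi : |(P j).indicator (fun _ => (1:ℝ)) x| ≤ 1 := by
        by_cases hx : x ∈ P j <;> simp [Set.indicator_of_mem, Set.indicator_of_notMem, hx]
      have hg : |∫ y in T ∩ P l, W x y| ≤ C :=
        g_bound hC hCnn (hTm.inter (hPm l)) ((Set.inter_subset_left).trans hT) x
      rw [abs_mul, abs_mul]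
      exact mul_le_mul hi (mul_le_mul_of_nonneg_left hg (abs_nonneg _))
        (by positivity) one_pos.le
  rw [h2, integral_finset_sum _ (fun j _ => integrable_finset_sum _ (fun l _ => intg j l))]
  refine Finset.sum_congr rfl fun j _ => ?_
  rw [integral_finset_sum _ (fun l _ => intg j l)]
  refine Finset.sum_congr rfl fun l _ => ?_
  have h3 : ∀ x, (P j).indicator (fun _ => (1:ℝ)) x * (A j l * ∫ y in T ∩ P l, W x y)
      = (P j).indicator (fun x => A j l * ∫ y in T ∩ P l, W x y) x := by
    intro x
    by_cases hx : x ∈ P j <;> simp [Set.indicator_of_mem, Set.indicator_of_notMem, hx]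
  rw [integral_congr_ae (Filter.Eventually.of_forall h3), setIntegral_indicator (hPm j),
    integral_const_mul _ _]

end Aux

theorem cutPNorm_eq_max_sign_cutNorm {t : ℕ} (W : ℝ → ℝ → ℝ) (hW : IsKernel W)
    (P : Fin t → Set ℝ) (hP : IsPartition P) :
    IsGreatest { r | ∃ A : Fin t → Fin t → ℝ, (∀ j l, A j l = 1 ∨ A j l = -1) ∧
      r = cutNorm (fun x y => (∑ j, ∑ l, (P j).indicator (fun _ => (1:ℝ)) x *
            (P l).indicator (fun _ => (1:ℝ)) y * A j l) * W x y) }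
      (cutPNorm P W) := by
  classical
  obtain ⟨hWm, C0, hC0⟩ := hW
  obtain ⟨hPm, hPs, hPd, hPu⟩ := hP
  set C : ℝ := max C0 0 with hCdef
  have hC : ∀ x y, |W x y| ≤ C := fun x y => le_trans (hC0 x y) (le_max_left _ _)
  have hCnn : (0:ℝ) ≤ C := le_max_right _ _
  have hzeroP : (0:ℝ) ∈ { r | ∃ S T : Fin t → Set ℝ,
      (∀ i, MeasurableSet (S i) ∧ MeasurableSet (T i) ∧ S i ⊆ P i ∧ T i ⊆ P i) ∧
      r = ∑ i, ∑ j, |∫ x in S i, ∫ y in T j, W x y| } := by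
    refine ⟨fun _ => ∅, fun _ => ∅, fun i =>
      ⟨MeasurableSet.empty, MeasurableSet.empty, empty_subset _, empty_subset _⟩, ?_⟩
    simp
  have hbddP : BddAbove { r | ∃ S T : Fin t → Set ℝ,
      (∀ i, MeasurableSet (S i) ∧ MeasurableSet (T i) ∧ S i ⊆ P i ∧ T i ⊆ P i) ∧
      r = ∑ i, ∑ j, |∫ x in S i, ∫ y in T j, W x y| } := by
    refine ⟨(t : ℝ) * ((t : ℝ) * C), ?_⟩
    rintro r ⟨S, T, hST, rfl⟩
    calc ∑ i, ∑ j, |∫ x in S i, ∫ y in T j, W x y|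
        ≤ ∑ _i : Fin t, ∑ _j : Fin t, C :=
          Finset.sum_le_sum fun i _ => Finset.sum_le_sum fun j _ =>
            double_bound hC hCnn (hST i).1 ((hST i).2.2.1.trans (hPs i))
              (hST j).2.1 ((hST j).2.2.2.trans (hPs j))
      _ = (t : ℝ) * ((t : ℝ) * C) := by
          simp [Finset.sum_const, Finset.card_univ, nsmul_eq_mul]
  have hzeroN : ∀ A : Fin t → Fin t → ℝ, (0:ℝ) ∈ { r | ∃ S T : Set ℝ,
      MeasurableSet S ∧ MeasurableSet T ∧ S ⊆ I01 ∧ T ⊆ I01 ∧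
      r = |∫ x in S, ∫ y in T, (fun x y => (∑ j, ∑ l, (P j).indicator (fun _ => (1:ℝ)) x *
            (P l).indicator (fun _ => (1:ℝ)) y * A j l) * W x y) x y| } := by
    intro A
    exact ⟨∅, ∅, MeasurableSet.empty, MeasurableSet.empty, empty_subset _, empty_subset _,
      by simp⟩
  have hub : ∀ A : Fin t → Fin t → ℝ, (∀ j l, A j l = 1 ∨ A j l = -1) →
      ∀ s ∈ { r | ∃ S T : Set ℝ,
        MeasurableSet S ∧ MeasurableSet T ∧ S ⊆ I01 ∧ T ⊆ I01 ∧
        r = |∫ x in S, ∫ y in T, (fun x y => (∑ j, ∑ l, (P j).indicator (fun _ => (1:ℝ)) x *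
            (P l).indicator (fun _ => (1:ℝ)) y * A j l) * W x y) x y| },
        s ≤ cutPNorm P W := by
    rintro A hA s ⟨S, T, hSm, hTm, hS, hT, rfl⟩
    have habsA : ∀ j l, |A j l| = 1 := fun j l => by rcases hA j l with h | h <;> simp [h]
    have hcore := core hWm hC hCnn hPm hPs A hSm hTm hS hT
    calc |∫ x in S, ∫ y in T, (fun x y => (∑ j, ∑ l, (P j).indicator (fun _ => (1:ℝ)) x *
            (P l).indicator (fun _ => (1:ℝ)) y * A j l) * W x y) x y|
        = |∑ j, ∑ l, A j l * ∫ x in S ∩ P j, ∫ y in T ∩ P l, W x y| := by rw [hcore]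
      _ ≤ ∑ j, |∑ l, A j l * ∫ x in S ∩ P j, ∫ y in T ∩ P l, W x y| :=
          Finset.abs_sum_le_sum_abs _ _
      _ ≤ ∑ j, ∑ l, |A j l * ∫ x in S ∩ P j, ∫ y in T ∩ P l, W x y| :=
          Finset.sum_le_sum fun j _ => Finset.abs_sum_le_sum_abs _ _
      _ = ∑ j, ∑ l, |∫ x in S ∩ P j, ∫ y in T ∩ P l, W x y| :=
          Finset.sum_congr rfl fun j _ => Finset.sum_congr rfl fun l _ => by
            rw [abs_mul, habsA, one_mul]
      _ ≤ cutPNorm P W := by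
          rw [cutPNorm]
          exact le_csSup hbddP ⟨fun i => S ∩ P i, fun i => T ∩ P i, fun i =>
            ⟨hSm.inter (hPm i), hTm.inter (hPm i), inter_subset_right, inter_subset_right⟩, rfl⟩
  constructor
  · -- membership
    set F : (Fin t → Fin t → Bool) → (Fin t → Fin t → ℝ) :=
      fun b j l => if b j l then 1 else -1 with hF
    have hsgn : ∀ b j l, F b j l = 1 ∨ F b j l = -1 := by
      intro b j l
      by_cases h : b j l <;> simp [hF, h]
    obtain ⟨b₀, hb₀⟩ := Finite.exists_max fun b : Fin t → Fin t → Bool =>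
      cutNorm (fun x y => (∑ j, ∑ l, (P j).indicator (fun _ => (1:ℝ)) x *
            (P l).indicator (fun _ => (1:ℝ)) y * F b j l) * W x y)
    refine ⟨F b₀, hsgn b₀, ?_⟩
    have h2 : cutNorm (fun x y => (∑ j, ∑ l, (P j).indicator (fun _ => (1:ℝ)) x *
            (P l).indicator (fun _ => (1:ℝ)) y * F b₀ j l) * W x y) ≤ cutPNorm P W := by
      rw [cutNorm]
      exact csSup_le ⟨0, hzeroN (F b₀)⟩ (hub (F b₀) (hsgn b₀))
    have h1 : cutPNorm P W ≤ cutNorm (fun x y => (∑ j, ∑ l, (P j).indicator (fun _ => (1:ℝ)) x *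
            (P l).indicator (fun _ => (1:ℝ)) y * F b₀ j l) * W x y) := by
      rw [cutPNorm]
      refine csSup_le ⟨0, hzeroP⟩ ?_
      rintro r ⟨S, T, hST, rfl⟩
      set b : Fin t → Fin t → Bool :=
        fun i j => decide (0 ≤ ∫ x in S i, ∫ y in T j, W x y) with hb
      have hSU : MeasurableSet (⋃ i, S i) := MeasurableSet.iUnion fun i => (hST i).1
      have hTU : MeasurableSet (⋃ i, T i) := MeasurableSet.iUnion fun i => (hST i).2.1
      have hSU1 : (⋃ i, S i) ⊆ I01 := iUnion_subset fun i => (hST i).2.2.1.trans (hPs i)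
      have hTU1 : (⋃ i, T i) ⊆ I01 := iUnion_subset fun i => (hST i).2.2.2.trans (hPs i)
      have hSP : ∀ j, (⋃ i, S i) ∩ P j = S j := by
        intro j
        apply subset_antisymm
        · intro x hx
          obtain ⟨i, hxi⟩ := mem_iUnion.mp hx.1
          rcases eq_or_ne i j with rfl | hij
          · exact hxi
          · exact absurd hx.2 (Set.disjoint_left.mp (hPd hij) ((hST i).2.2.1 hxi))
        · exact subset_inter (subset_iUnion S j) (hST j).2.2.1
      have hTP : ∀ j, (⋃ i, T i) ∩ P j = T j := by
        intro j
        apply subset_antisymm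
        · intro x hx
          obtain ⟨i, hxi⟩ := mem_iUnion.mp hx.1
          rcases eq_or_ne i j with rfl | hij
          · exact hxi
          · exact absurd hx.2 (Set.disjoint_left.mp (hPd hij) ((hST i).2.2.2 hxi))
        · exact subset_inter (subset_iUnion T j) (hST j).2.2.2
      have hcore := core hWm hC hCnn hPm hPs (F b) hSU hTU hSU1 hTU1
      have habs : ∑ i, ∑ j, |∫ x in S i, ∫ y in T j, W x y|
          = ∑ i, ∑ j, F b i j * ∫ x in S i, ∫ y in T j, W x y := by
        refine Finset.sum_congr rfl fun i _ => Finset.sum_congr rfl fun j _ => ?_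
        rcases le_or_gt 0 (∫ x in S i, ∫ y in T j, W x y) with h | h
        · rw [abs_of_nonneg h]
          simp [hF, hb, h]
        · rw [abs_of_neg h]
          simp [hF, hb, not_le.mpr h]
      have hkey : ∑ i, ∑ j, F b i j * ∫ x in S i, ∫ y in T j, W x y
          = ∫ x in ⋃ i, S i, ∫ y in ⋃ i, T i,
              (∑ j, ∑ l, (P j).indicator (fun _ => (1:ℝ)) x *
                (P l).indicator (fun _ => (1:ℝ)) y * F b j l) * W x y := by
        rw [hcore]
        exact Finset.sum_congr rfl fun i _ => Finset.sum_congr rfl fun j _ => by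
          rw [hSP i, hTP j]
      rw [habs, hkey]
      calc (∫ x in ⋃ i, S i, ∫ y in ⋃ i, T i,
              (∑ j, ∑ l, (P j).indicator (fun _ => (1:ℝ)) x *
                (P l).indicator (fun _ => (1:ℝ)) y * F b j l) * W x y)
          ≤ |∫ x in ⋃ i, S i, ∫ y in ⋃ i, T i,
              (∑ j, ∑ l, (P j).indicator (fun _ => (1:ℝ)) x *
                (P l).indicator (fun _ => (1:ℝ)) y * F b j l) * W x y| := le_abs_self _
        _ ≤ cutNorm (fun x y => (∑ j, ∑ l, (P j).indicator (fun _ => (1:ℝ)) x *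
                (P l).indicator (fun _ => (1:ℝ)) y * F b j l) * W x y) := by
            rw [cutNorm]
            exact le_csSup ⟨cutPNorm P W, fun s hs => hub (F b) (hsgn b) s hs⟩
              ⟨⋃ i, S i, ⋃ i, T i, hSU, hTU, hSU1, hTU1, rfl⟩
        _ ≤ cutNorm (fun x y => (∑ j, ∑ l, (P j).indicator (fun _ => (1:ℝ)) x *
                (P l).indicator (fun _ => (1:ℝ)) y * F b₀ j l) * W x y) := hb₀ b
    exact le_antisymm h1 h2
  · -- upper bound
    rintro r ⟨A, hA, rfl⟩
    rw [cutNorm]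
    exact csSup_le ⟨0, hzeroN A⟩ (hub A hA)
end
end

section
/- Let W, U be kernels with values in [0,1] and let P, S be measurable partitions of [0,1] into l parts each. If for all i the parts satisfy λ(P_i △ S_i) ≤ ε_i, then |‖W_P‖₂² − ‖W_S‖₂²| ≤ 14 Σ_i λ(P_i △ S_i). -/
open MeasureTheory Set

noncomputable section

/-! ### Auxiliary lemmas -/

lemma vol_I01 : volume I01 = 1 := by rw [Real.volume_Icc]; norm_num

lemma vol_ne_top {A : Set ℝ} (hA : A ⊆ I01) : volume A ≠ ⊤ := by
  intro h
  have h2 := measure_mono (μ := (volume : Measure ℝ)) hA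
  rw [h, vol_I01] at h2
  simp at h2

lemma vol_le_one_s6 {A : Set ℝ} (hA : A ⊆ I01) : (volume A).toReal ≤ 1 := by
  have h2 := measure_mono (μ := (volume : Measure ℝ)) hA
  rw [vol_I01] at h2
  have := ENNReal.toReal_mono (by simp) h2
  simpa using this

section kernelAux
variable {W : ℝ → ℝ → ℝ}

lemma Wx_meas (hWm : Measurable (Function.uncurry W)) (x : ℝ) : Measurable (W x) :=
  hWm.comp measurable_prodMk_left

lemma Wx_intOn (hWm : Measurable (Function.uncurry W))
    (hWr : ∀ x y, W x y ∈ Set.Icc (0:ℝ) 1) (x : ℝ) {B : Set ℝ} (hBs : B ⊆ I01) :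
    IntegrableOn (W x) B volume := by
  refine Integrable.mono' (g := fun _ => (1:ℝ))
    (integrableOn_const (vol_ne_top hBs))
    ((Wx_meas hWm x).aestronglyMeasurable) ?_
  filter_upwards with y
  rw [Real.norm_eq_abs, abs_le]
  exact ⟨by linarith [(hWr x y).1], (hWr x y).2⟩

lemma inner_meas (hWm : Measurable (Function.uncurry W)) {B : Set ℝ} :
    Measurable fun x => ∫ y in B, W x y :=
  (hWm.stronglyMeasurable.integral_prod_right' (ν := volume.restrict B)).measurable

lemma inner_nonneg (hWr : ∀ x y, W x y ∈ Set.Icc (0:ℝ) 1) (x : ℝ) {B : Set ℝ}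
    (hB : MeasurableSet B) : 0 ≤ ∫ y in B, W x y :=
  setIntegral_nonneg hB fun y _ => (hWr x y).1

lemma inner_le (hWm : Measurable (Function.uncurry W))
    (hWr : ∀ x y, W x y ∈ Set.Icc (0:ℝ) 1) (x : ℝ) {B : Set ℝ} (hBs : B ⊆ I01) :
    (∫ y in B, W x y) ≤ (volume B).toReal := by
  calc (∫ y in B, W x y) ≤ ∫ _y in B, (1:ℝ) :=
        setIntegral_mono (Wx_intOn hWm hWr x hBs)
          (integrableOn_const (vol_ne_top hBs)) (fun y => (hWr x y).2)
    _ = (volume B).toReal := by simp [Measure.real_def]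

lemma inner_intOn (hWm : Measurable (Function.uncurry W))
    (hWr : ∀ x y, W x y ∈ Set.Icc (0:ℝ) 1) {A B : Set ℝ} (hA : A ⊆ I01)
    (hB : MeasurableSet B) (hBs : B ⊆ I01) :
    IntegrableOn (fun x => ∫ y in B, W x y) A volume := by
  refine Integrable.mono' (g := fun _ => (1:ℝ))
    (integrableOn_const (vol_ne_top hA))
    ((inner_meas hWm).aestronglyMeasurable) ?_
  filter_upwards with x
  rw [Real.norm_eq_abs, abs_le]
  refine ⟨by linarith [inner_nonneg hWr x hB], ?_⟩
  linarith [inner_le hWm hWr x hBs, vol_le_one_s6 hBs]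

lemma DB_nonneg (hWr : ∀ x y, W x y ∈ Set.Icc (0:ℝ) 1) {A B : Set ℝ}
    (hA : MeasurableSet A) (hB : MeasurableSet B) :
    0 ≤ ∫ x in A, ∫ y in B, W x y :=
  setIntegral_nonneg hA fun x _ => inner_nonneg hWr x hB

lemma DB_le (hWm : Measurable (Function.uncurry W)) (hWr : ∀ x y, W x y ∈ Set.Icc (0:ℝ) 1)
    {A B : Set ℝ} (hA : MeasurableSet A) (hAs : A ⊆ I01) (hB : MeasurableSet B) (hBs : B ⊆ I01) :
    (∫ x in A, ∫ y in B, W x y) ≤ (volume A).toReal * (volume B).toReal := by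
  calc (∫ x in A, ∫ y in B, W x y) ≤ ∫ _x in A, (volume B).toReal :=
        setIntegral_mono (inner_intOn hWm hWr hAs hB hBs)
          (integrableOn_const (vol_ne_top hAs))
          (fun x => inner_le hWm hWr x hBs)
    _ = (volume A).toReal * (volume B).toReal := by simp [mul_comm, Measure.real_def]

lemma DB_mono (hWm : Measurable (Function.uncurry W)) (hWr : ∀ x y, W x y ∈ Set.Icc (0:ℝ) 1)
    {A A' B B' : Set ℝ} (hA : MeasurableSet A) (hAs : A ⊆ I01)
    (hB : MeasurableSet B) (hBs : B ⊆ I01) (hA' : MeasurableSet A') (hB' : MeasurableSet B')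
    (hAA : A' ⊆ A) (hBB : B' ⊆ B) :
    (∫ x in A', ∫ y in B', W x y) ≤ ∫ x in A, ∫ y in B, W x y := by
  have h1 : ∀ x : ℝ, (∫ y in B', W x y) ≤ ∫ y in B, W x y := fun x =>
    setIntegral_mono_set (Wx_intOn hWm hWr x hBs)
      (Filter.Eventually.of_forall fun y => (hWr x y).1)
      (HasSubset.Subset.eventuallyLE hBB)
  calc (∫ x in A', ∫ y in B', W x y) ≤ ∫ x in A', ∫ y in B, W x y :=
        setIntegral_mono (inner_intOn hWm hWr (hAA.trans hAs) hB' (hBB.trans hBs))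
          (inner_intOn hWm hWr (hAA.trans hAs) hB hBs) h1
    _ ≤ ∫ x in A, ∫ y in B, W x y :=
        setIntegral_mono_set (inner_intOn hWm hWr hAs hB hBs)
          (Filter.Eventually.of_forall fun x => inner_nonneg hWr x hB)
          (HasSubset.Subset.eventuallyLE hAA)

lemma vol_diff_toReal {A' A : Set ℝ} (hA' : MeasurableSet A') (hAA : A' ⊆ A) (hAs : A ⊆ I01) :
    (volume (A \ A')).toReal = (volume A).toReal - (volume A').toReal := by
  rw [measure_diff hAA hA'.nullMeasurableSet (vol_ne_top (hAA.trans hAs)),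
    ENNReal.toReal_sub_of_le (measure_mono hAA) (vol_ne_top hAs)]

lemma DB_diff_le (hWm : Measurable (Function.uncurry W)) (hWr : ∀ x y, W x y ∈ Set.Icc (0:ℝ) 1)
    {A A' B B' : Set ℝ} (hA : MeasurableSet A) (hAs : A ⊆ I01)
    (hB : MeasurableSet B) (hBs : B ⊆ I01) (hA' : MeasurableSet A') (hB' : MeasurableSet B')
    (hAA : A' ⊆ A) (hBB : B' ⊆ B) :
    (∫ x in A, ∫ y in B, W x y) - (∫ x in A', ∫ y in B', W x y) ≤
      (volume A).toReal * (volume B).toReal - (volume A').toReal * (volume B').toReal := by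
  have hstep1 : (∫ x in A, ∫ y in B, W x y) - (∫ x in A', ∫ y in B, W x y) ≤
      ((volume A).toReal - (volume A').toReal) * (volume B).toReal := by
    have hdiff : (∫ x in A \ A', ∫ y in B, W x y) =
        (∫ x in A, ∫ y in B, W x y) - (∫ x in A', ∫ y in B, W x y) :=
      integral_diff hA' (inner_intOn hWm hWr hAs hB hBs) hAA
    rw [← hdiff, ← vol_diff_toReal hA' hAA hAs]
    exact DB_le hWm hWr (hA.diff hA') ((diff_subset).trans hAs) hB hBs
  have hstep2 : (∫ x in A', ∫ y in B, W x y) - (∫ x in A', ∫ y in B', W x y) ≤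
      (volume A').toReal * ((volume B).toReal - (volume B').toReal) := by
    have hpt : ∀ x : ℝ, (∫ y in B, W x y) - (∫ y in B', W x y) =
        ∫ y in B \ B', W x y := fun x =>
      (integral_diff hB' (Wx_intOn hWm hWr x hBs) hBB).symm
    have hsub : (∫ x in A', ∫ y in B, W x y) - (∫ x in A', ∫ y in B', W x y) =
        ∫ x in A', ((∫ y in B, W x y) - ∫ y in B', W x y) :=
      (integral_sub (inner_intOn hWm hWr (hAA.trans hAs) hB hBs)
        (inner_intOn hWm hWr (hAA.trans hAs) hB' (hBB.trans hBs))).symm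
    rw [hsub]
    calc (∫ x in A', ((∫ y in B, W x y) - ∫ y in B', W x y)) =
          ∫ x in A', ∫ y in B \ B', W x y :=
            setIntegral_congr_fun hA' fun x _ => hpt x
      _ ≤ (volume A').toReal * (volume (B \ B')).toReal :=
          DB_le hWm hWr hA' (hAA.trans hAs) (hB.diff hB') ((diff_subset).trans hBs)
      _ = (volume A').toReal * ((volume B).toReal - (volume B').toReal) := by
          rw [vol_diff_toReal hB' hBB hBs]
  nlinarith [hstep1, hstep2]

end kernelAux

/-! ### Step function computation -/

lemma ind_disj {s t : Set ℝ} (h : Disjoint s t) (x : ℝ) :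
    s.indicator (fun _ => (1:ℝ)) x * t.indicator (fun _ => (1:ℝ)) x = 0 := by
  by_cases hx : x ∈ s
  · have : x ∉ t := fun hx' => (h.ne_of_mem hx hx') rfl
    simp [this]
  · simp [hx]

lemma sum_ind_mul {ι : Type*} [Fintype ι] (P : ι → Set ℝ)
    (hdisj : Pairwise fun i j => Disjoint (P i) (P j)) (x : ℝ) (g h : ι → ℝ) :
    (∑ i, (P i).indicator (fun _ => (1:ℝ)) x * g i) *
      (∑ j, (P j).indicator (fun _ => (1:ℝ)) x * h j) =
    ∑ i, (P i).indicator (fun _ => (1:ℝ)) x * (g i * h i) := by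
  rw [Finset.sum_mul_sum]
  refine Finset.sum_congr rfl fun i _ => ?_
  rw [Finset.sum_eq_single i]
  · by_cases hx : x ∈ P i
    · simp [Set.indicator_of_mem hx]
    · simp [Set.indicator_of_notMem hx]
  · intro j _ hji
    have h0 := ind_disj (hdisj hji.symm) x
    calc (P i).indicator (fun _ => (1:ℝ)) x * g i * ((P j).indicator (fun _ => (1:ℝ)) x * h j)
        = ((P i).indicator (fun _ => (1:ℝ)) x * (P j).indicator (fun _ => (1:ℝ)) x) *
            (g i * h j) := by ring
      _ = 0 := by rw [h0]; ring
  · simp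

lemma setIntegral_I01_indicator {s : Set ℝ} (hs : MeasurableSet s) (hsub : s ⊆ I01) (c : ℝ) :
    ∫ y in I01, s.indicator (fun _ => c) y = (volume s).toReal * c := by
  rw [setIntegral_indicator hs, inter_eq_self_of_subset_right hsub, setIntegral_const,
    smul_eq_mul]
  rfl

lemma div_sq_identity (a b c : ℝ) : a * (b * (c / a / b)^2) = c^2 / (a * b) := by
  rcases eq_or_ne a 0 with ha | ha
  · simp [ha]
  rcases eq_or_ne b 0 with hb | hb
  · simp [hb]
  field_simp

lemma l2sq_avgP (W : ℝ → ℝ → ℝ) {l : ℕ} (P : Fin l → Set ℝ) (hP : IsPartition P) :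
    l2sq (avgP P W) = ∑ i, ∑ j, (∫ u in P i, ∫ v in P j, W u v)^2 /
      ((volume (P i)).toReal * (volume (P j)).toReal) := by
  obtain ⟨hmeas, hsub, hdisj, -⟩ := hP
  haveI : IsFiniteMeasure (volume.restrict I01) :=
    ⟨by rw [Measure.restrict_apply_univ, vol_I01]; exact ENNReal.one_lt_top⟩
  set q : Fin l → Fin l → ℝ := fun i j =>
    (∫ u in P i, ∫ v in P j, W u v) / (volume (P i)).toReal / (volume (P j)).toReal with hq
  have hpt : ∀ x y : ℝ, (avgP P W x y)^2 =
      ∑ i, ∑ j, (P i).indicator (fun _ => (1:ℝ)) x * (P j).indicator (fun _ => (1:ℝ)) y *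
        (q i j)^2 := by
    intro x y
    have hform : avgP P W x y = ∑ i, (P i).indicator (fun _ => (1:ℝ)) x *
        (∑ j, (P j).indicator (fun _ => (1:ℝ)) y * q i j) := by
      unfold avgP
      refine Finset.sum_congr rfl fun i _ => ?_
      rw [Finset.mul_sum]
      refine Finset.sum_congr rfl fun j _ => ?_
      ring
    rw [hform, sq, sum_ind_mul P hdisj x]
    refine Finset.sum_congr rfl fun i _ => ?_
    rw [sum_ind_mul P hdisj y, Finset.mul_sum]
    refine Finset.sum_congr rfl fun j _ => ?_
    rw [sq]
    ring
  have hswap : ∀ (x : ℝ) (i j : Fin l),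
      (fun y => (P i).indicator (fun _ => (1:ℝ)) x * (P j).indicator (fun _ => (1:ℝ)) y *
        (q i j)^2) = fun y => (P j).indicator
          (fun _ => (P i).indicator (fun _ => (1:ℝ)) x * (q i j)^2) y := by
    intro x i j
    funext y
    by_cases hy : y ∈ P j <;> simp [hy]
  have hint_term : ∀ (x : ℝ) (i j : Fin l), Integrable
      (fun y => (P i).indicator (fun _ => (1:ℝ)) x * (P j).indicator (fun _ => (1:ℝ)) y *
        (q i j)^2) (volume.restrict I01) := by
    intro x i j
    rw [hswap]
    exact (integrable_const _).indicator (hmeas j)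
  have hinner : ∀ x : ℝ, (∫ y in I01, (avgP P W x y)^2) =
      ∑ i, ∑ j, (P i).indicator (fun _ => (1:ℝ)) x * ((volume (P j)).toReal * (q i j)^2) := by
    intro x
    rw [show (∫ y in I01, (avgP P W x y)^2) = ∫ y in I01, ∑ i, ∑ j,
        (P i).indicator (fun _ => (1:ℝ)) x * (P j).indicator (fun _ => (1:ℝ)) y * (q i j)^2 from
      integral_congr_ae (Filter.Eventually.of_forall fun y => hpt x y)]
    rw [integral_finset_sum _ fun i _ => integrable_finset_sum _ fun j _ => hint_term x i j]
    refine Finset.sum_congr rfl fun i _ => ?_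
    rw [integral_finset_sum _ fun j _ => hint_term x i j]
    refine Finset.sum_congr rfl fun j _ => ?_
    rw [show (∫ y in I01, (P i).indicator (fun _ => (1:ℝ)) x *
          (P j).indicator (fun _ => (1:ℝ)) y * (q i j)^2)
        = ∫ y in I01, (P j).indicator
            (fun _ => (P i).indicator (fun _ => (1:ℝ)) x * (q i j)^2) y from by rw [hswap]]
    rw [setIntegral_I01_indicator (hmeas j) (hsub j)]
    ring
  have hswap2 : ∀ i j : Fin l,
      (fun x => (P i).indicator (fun _ => (1:ℝ)) x * ((volume (P j)).toReal * (q i j)^2))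
        = fun x => (P i).indicator (fun _ => (volume (P j)).toReal * (q i j)^2) x := by
    intro i j
    funext x
    by_cases hx : x ∈ P i <;> simp [hx]
  have hint_term2 : ∀ i j : Fin l, Integrable
      (fun x => (P i).indicator (fun _ => (1:ℝ)) x * ((volume (P j)).toReal * (q i j)^2))
      (volume.restrict I01) := by
    intro i j
    rw [hswap2]
    exact (integrable_const _).indicator (hmeas i)
  unfold l2sq
  calc (∫ x in I01, ∫ y in I01, (avgP P W x y)^2)
      = ∫ x in I01, ∑ i, ∑ j, (P i).indicator (fun _ => (1:ℝ)) x *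
          ((volume (P j)).toReal * (q i j)^2) :=
        integral_congr_ae (Filter.Eventually.of_forall fun x => hinner x)
    _ = ∑ i, ∑ j, (volume (P i)).toReal * ((volume (P j)).toReal * (q i j)^2) := by
        rw [integral_finset_sum _ fun i _ => integrable_finset_sum _ fun j _ => hint_term2 i j]
        refine Finset.sum_congr rfl fun i _ => ?_
        rw [integral_finset_sum _ fun j _ => hint_term2 i j]
        refine Finset.sum_congr rfl fun j _ => ?_
        rw [show (∫ x in I01, (P i).indicator (fun _ => (1:ℝ)) x *
              ((volume (P j)).toReal * (q i j)^2))
            = ∫ x in I01, (P i).indicator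
                (fun _ => (volume (P j)).toReal * (q i j)^2) x from by rw [hswap2]]
        rw [setIntegral_I01_indicator (hmeas i) (hsub i)]
    _ = ∑ i, ∑ j, (∫ u in P i, ∫ v in P j, W u v)^2 /
          ((volume (P i)).toReal * (volume (P j)).toReal) := by
        refine Finset.sum_congr rfl fun i _ => Finset.sum_congr rfl fun j _ => ?_
        exact div_sq_identity _ _ _

/-! ### Arithmetic lemmas -/

set_option maxHeartbeats 1000000 in
lemma term_bound {a b u c e x : ℝ} (hu0 : 0 ≤ u) (hua : u ≤ a) (hub : u ≤ b)
    (hx0 : 0 ≤ x) (hxu : x ≤ u) (hxc : x ≤ c) (hxe : x ≤ e) (hca : c ≤ a) (heb : e ≤ b)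
    (hcx : c - x ≤ a - u) (hex : e - x ≤ b - u) :
    |c^2/a - e^2/b| ≤ 3*(a-u) + 3*(b-u) := by
  have hc0 : 0 ≤ c := hx0.trans hxc
  have he0 : 0 ≤ e := hx0.trans hxe
  have ha0 : 0 ≤ a := hu0.trans hua
  have hb0 : 0 ≤ b := hu0.trans hub
  rcases eq_or_lt_of_le ha0 with ha | hapos
  · have hc : c = 0 := le_antisymm (hca.trans ha.symm.le) hc0
    have hu : u = 0 := le_antisymm (hua.trans ha.symm.le) hu0
    have hca0 : c^2/a = 0 := by rw [hc]; simp
    rcases eq_or_lt_of_le hb0 with hb | hbpos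
    · have he : e = 0 := le_antisymm (heb.trans hb.symm.le) he0
      have heb0 : e^2/b = 0 := by rw [he]; simp
      rw [hca0, heb0]
      simp only [sub_zero, sub_self, abs_zero]
      linarith
    · have h1 : e^2/b ≤ e := by
        rw [div_le_iff₀ hbpos]
        nlinarith
      have h2 : 0 ≤ e^2/b := div_nonneg (sq_nonneg e) hb0
      rw [hca0, abs_le]
      constructor <;> linarith
  rcases eq_or_lt_of_le hb0 with hb | hbpos
  · have he : e = 0 := le_antisymm (heb.trans hb.symm.le) he0
    have hu : u = 0 := le_antisymm (hub.trans hb.symm.le) hu0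
    have heb0 : e^2/b = 0 := by rw [he]; simp
    have h1 : c^2/a ≤ c := by
      rw [div_le_iff₀ hapos]
      nlinarith
    have h2 : 0 ≤ c^2/a := div_nonneg (sq_nonneg c) ha0
    rw [heb0, abs_le]
    constructor <;> linarith
  have hxa : x ≤ a := hxu.trans hua
  have hxb : x ≤ b := hxu.trans hub
  have hx2ab : x^2 ≤ a*b := by nlinarith
  have key1 : c^2/a - x^2/a ≤ 2*(a-u) := by
    rw [div_sub_div_same, div_le_iff₀ hapos]
    nlinarith [mul_le_mul_of_nonneg_left hcx (show (0:ℝ) ≤ 2*a by linarith),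
      mul_nonneg (sub_nonneg.2 hxc) (show (0:ℝ) ≤ 2*a - c - x by linarith)]
  have key1' : 0 ≤ c^2/a - x^2/a := by
    rw [div_sub_div_same]
    apply div_nonneg _ ha0
    nlinarith
  have key3 : e^2/b - x^2/b ≤ 2*(b-u) := by
    rw [div_sub_div_same, div_le_iff₀ hbpos]
    nlinarith [mul_le_mul_of_nonneg_left hex (show (0:ℝ) ≤ 2*b by linarith),
      mul_nonneg (sub_nonneg.2 hxe) (show (0:ℝ) ≤ 2*b - e - x by linarith)]
  have key3' : 0 ≤ e^2/b - x^2/b := by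
    rw [div_sub_div_same]
    apply div_nonneg _ hb0
    nlinarith
  have key2 : |x^2/a - x^2/b| ≤ (a-u) + (b-u) := by
    rcases le_total a b with hab | hab
    · rw [abs_of_nonneg (by
        have := div_le_div_of_nonneg_left (sq_nonneg x) hapos hab
        linarith)]
      have h3 : x^2/a - x^2/b ≤ b - a := by
        rw [div_sub_div _ _ hapos.ne' hbpos.ne', div_le_iff₀ (mul_pos hapos hbpos)]
        nlinarith [mul_le_mul_of_nonneg_right hx2ab (sub_nonneg.2 hab)]
      linarith
    · rw [abs_of_nonpos (by
        have := div_le_div_of_nonneg_left (sq_nonneg x) hbpos hab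
        linarith)]
      have h3 : x^2/b - x^2/a ≤ a - b := by
        rw [div_sub_div _ _ hbpos.ne' hapos.ne', div_le_iff₀ (mul_pos hbpos hapos)]
        nlinarith [mul_le_mul_of_nonneg_right hx2ab (sub_nonneg.2 hab)]
      linarith
  obtain ⟨hm1, hm2⟩ := abs_le.1 key2
  rw [abs_le]
  constructor <;> linarith

lemma sum_combo {l : ℕ} (f g h : Fin l → ℝ) :
    ∑ i, ∑ j, (3*(f i*f j - h i*h j) + 3*(g i*g j - h i*h j)) =
      3*((∑ i, f i)*(∑ i, f i)) + 3*((∑ i, g i)*(∑ i, g i)) -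
        6*((∑ i, h i)*(∑ i, h i)) := by
  rw [Finset.sum_mul_sum, Finset.sum_mul_sum, Finset.sum_mul_sum]
  simp only [Finset.mul_sum, ← Finset.sum_add_distrib, ← Finset.sum_sub_distrib]
  exact Finset.sum_congr rfl fun i _ => Finset.sum_congr rfl fun j _ => by ring

lemma abs_double_sum_sub {l : ℕ} (a b : Fin l → Fin l → ℝ) :
    |(∑ i, ∑ j, a i j) - ∑ i, ∑ j, b i j| ≤ ∑ i, ∑ j, |a i j - b i j| := by
  rw [← Finset.sum_sub_distrib]
  calc |∑ i, ((∑ j, a i j) - ∑ j, b i j)| ≤ ∑ i, |(∑ j, a i j) - ∑ j, b i j| :=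
        Finset.abs_sum_le_sum_abs _ _
    _ ≤ ∑ i, ∑ j, |a i j - b i j| := by
        refine Finset.sum_le_sum fun i _ => ?_
        rw [← Finset.sum_sub_distrib]
        exact Finset.abs_sum_le_sum_abs _ _

/-! ### Measure bookkeeping -/

lemma symmdiff_union (A B : Set ℝ) : symmDiff A B ⊆ A ∪ B := by
  intro x hx
  rw [Set.mem_symmDiff] at hx
  tauto

lemma vol_sub_inter_le {A B : Set ℝ} (hA : A ⊆ I01) (hB : B ⊆ I01) :
    (volume A).toReal - (volume (A ∩ B)).toReal ≤ (volume (symmDiff A B)).toReal := by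
  have hsub : A ⊆ (A ∩ B) ∪ symmDiff A B := by
    intro x hx
    by_cases hb : x ∈ B
    · exact Or.inl ⟨hx, hb⟩
    · right
      rw [Set.mem_symmDiff]
      tauto
  have hfin1 : volume (A ∩ B) ≠ ⊤ := vol_ne_top ((Set.inter_subset_left).trans hA)
  have hfin2 : volume (symmDiff A B) ≠ ⊤ :=
    vol_ne_top ((symmdiff_union A B).trans (Set.union_subset hA hB))
  have h1 : volume A ≤ volume (A ∩ B) + volume (symmDiff A B) :=
    (measure_mono hsub).trans (measure_union_le _ _)
  have h2 := ENNReal.toReal_mono (ENNReal.add_ne_top.2 ⟨hfin1, hfin2⟩) h1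
  rw [ENNReal.toReal_add hfin1 hfin2] at h2
  linarith

lemma partition_sum_one {l : ℕ} {P : Fin l → Set ℝ} (hm : ∀ i, MeasurableSet (P i))
    (hs : ∀ i, P i ⊆ I01) (hd : Pairwise fun i j => Disjoint (P i) (P j))
    (hu : (⋃ i, P i) = I01) : ∑ i, (volume (P i)).toReal = 1 := by
  have h1 : volume (⋃ i, P i) = ∑' i, volume (P i) := measure_iUnion hd hm
  rw [hu, vol_I01, tsum_fintype] at h1
  have h2 := congrArg ENNReal.toReal h1
  rw [ENNReal.toReal_sum (fun i _ => vol_ne_top (hs i))] at h2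
  simpa using h2.symm

/-! ### Main theorem -/

theorem l2sq_avg_diff_le_symmDiff {l : ℕ} (W : ℝ → ℝ → ℝ)
    (hW : IsKernel W) (hWrange : ∀ x y, W x y ∈ Set.Icc (0:ℝ) 1)
    (P S : Fin l → Set ℝ) (hP : IsPartition P) (hS : IsPartition S)
    (ε : Fin l → ℝ) (hε : ∀ i, (volume (symmDiff (P i) (S i))).toReal ≤ ε i) :
    |l2sq (avgP P W) - l2sq (avgP S W)| ≤
      14 * ∑ i, (volume (symmDiff (P i) (S i))).toReal := by
  obtain ⟨hWm, -⟩ := hW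
  have hWr : ∀ x y, W x y ∈ Set.Icc (0:ℝ) 1 := hWrange
  obtain ⟨hPm, hPs, hPd, hPu⟩ := hP
  obtain ⟨hSm, hSs, hSd, hSu⟩ := hS
  have hPSm : ∀ i, MeasurableSet (P i ∩ S i) := fun i => (hPm i).inter (hSm i)
  have hPSs : ∀ i : Fin l, P i ∩ S i ⊆ I01 := fun i => (Set.inter_subset_left).trans (hPs i)
  have hm_le_p : ∀ i, (volume (P i ∩ S i)).toReal ≤ (volume (P i)).toReal := fun i =>
    ENNReal.toReal_mono (vol_ne_top (hPs i)) (measure_mono Set.inter_subset_left)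
  have hm_le_s : ∀ i, (volume (P i ∩ S i)).toReal ≤ (volume (S i)).toReal := fun i =>
    ENNReal.toReal_mono (vol_ne_top (hSs i)) (measure_mono Set.inter_subset_right)
  have hpm : ∀ i, (volume (P i)).toReal - (volume (P i ∩ S i)).toReal ≤
      (volume (symmDiff (P i) (S i))).toReal := fun i => vol_sub_inter_le (hPs i) (hSs i)
  have hsum_p : ∑ i, (volume (P i)).toReal = 1 := partition_sum_one hPm hPs hPd hPu
  have hsum_s : ∑ i, (volume (S i)).toReal = 1 := partition_sum_one hSm hSs hSd hSu
  have hterm : ∀ i j : Fin l,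
      |(∫ u in P i, ∫ v in P j, W u v)^2 / ((volume (P i)).toReal * (volume (P j)).toReal) -
        (∫ u in S i, ∫ v in S j, W u v)^2 / ((volume (S i)).toReal * (volume (S j)).toReal)| ≤
      3*((volume (P i)).toReal * (volume (P j)).toReal -
          (volume (P i ∩ S i)).toReal * (volume (P j ∩ S j)).toReal) +
      3*((volume (S i)).toReal * (volume (S j)).toReal -
          (volume (P i ∩ S i)).toReal * (volume (P j ∩ S j)).toReal) := by
    intro i j
    refine term_bound (x := ∫ u in P i ∩ S i, ∫ v in P j ∩ S j, W u v)
      ?_ ?_ ?_ ?_ ?_ ?_ ?_ ?_ ?_ ?_ ?_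
    · exact mul_nonneg ENNReal.toReal_nonneg ENNReal.toReal_nonneg
    · exact mul_le_mul (hm_le_p i) (hm_le_p j) ENNReal.toReal_nonneg ENNReal.toReal_nonneg
    · exact mul_le_mul (hm_le_s i) (hm_le_s j) ENNReal.toReal_nonneg ENNReal.toReal_nonneg
    · exact DB_nonneg hWr (hPSm i) (hPSm j)
    · exact DB_le hWm hWr (hPSm i) (hPSs i) (hPSm j) (hPSs j)
    · exact DB_mono hWm hWr (hPm i) (hPs i) (hPm j) (hPs j) (hPSm i) (hPSm j)
        Set.inter_subset_left Set.inter_subset_left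
    · exact DB_mono hWm hWr (hSm i) (hSs i) (hSm j) (hSs j) (hPSm i) (hPSm j)
        Set.inter_subset_right Set.inter_subset_right
    · exact DB_le hWm hWr (hPm i) (hPs i) (hPm j) (hPs j)
    · exact DB_le hWm hWr (hSm i) (hSs i) (hSm j) (hSs j)
    · have := DB_diff_le hWm hWr (hPm i) (hPs i) (hPm j) (hPs j) (hPSm i) (hPSm j)
        Set.inter_subset_left Set.inter_subset_left
      linarith
    · have := DB_diff_le hWm hWr (hSm i) (hSs i) (hSm j) (hSs j) (hPSm i) (hPSm j)
        Set.inter_subset_right Set.inter_subset_right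
      linarith
  rw [l2sq_avgP W P ⟨hPm, hPs, hPd, hPu⟩, l2sq_avgP W S ⟨hSm, hSs, hSd, hSu⟩]
  have hM0 : 0 ≤ ∑ i, (volume (P i ∩ S i)).toReal :=
    Finset.sum_nonneg fun i _ => ENNReal.toReal_nonneg
  have hM1 : (∑ i, (volume (P i ∩ S i)).toReal) ≤ 1 := by
    rw [← hsum_p]
    exact Finset.sum_le_sum fun i _ => hm_le_p i
  have hD0 : 0 ≤ ∑ i, (volume (symmDiff (P i) (S i))).toReal :=
    Finset.sum_nonneg fun i _ => ENNReal.toReal_nonneg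
  have h1M : 1 - (∑ i, (volume (P i ∩ S i)).toReal) ≤
      ∑ i, (volume (symmDiff (P i) (S i))).toReal := by
    have h := Finset.sum_le_sum fun i (_ : i ∈ Finset.univ) => hpm i
    rw [Finset.sum_sub_distrib, hsum_p] at h
    exact h
  calc |(∑ i, ∑ j, (∫ u in P i, ∫ v in P j, W u v)^2 /
            ((volume (P i)).toReal * (volume (P j)).toReal)) -
          ∑ i, ∑ j, (∫ u in S i, ∫ v in S j, W u v)^2 /
            ((volume (S i)).toReal * (volume (S j)).toReal)|
      ≤ ∑ i, ∑ j, |(∫ u in P i, ∫ v in P j, W u v)^2 /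
            ((volume (P i)).toReal * (volume (P j)).toReal) -
          (∫ u in S i, ∫ v in S j, W u v)^2 /
            ((volume (S i)).toReal * (volume (S j)).toReal)| :=
        abs_double_sum_sub _ _
    _ ≤ ∑ i, ∑ j, (3*((volume (P i)).toReal * (volume (P j)).toReal -
            (volume (P i ∩ S i)).toReal * (volume (P j ∩ S j)).toReal) +
          3*((volume (S i)).toReal * (volume (S j)).toReal -
            (volume (P i ∩ S i)).toReal * (volume (P j ∩ S j)).toReal)) :=
        Finset.sum_le_sum fun i _ => Finset.sum_le_sum fun j _ => hterm i j
    _ = 3*((∑ i, (volume (P i)).toReal)*(∑ i, (volume (P i)).toReal)) +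
          3*((∑ i, (volume (S i)).toReal)*(∑ i, (volume (S i)).toReal)) -
          6*((∑ i, (volume (P i ∩ S i)).toReal)*(∑ i, (volume (P i ∩ S i)).toReal)) :=
        sum_combo _ _ _
    _ ≤ 14 * ∑ i, (volume (symmDiff (P i) (S i))).toReal := by
        rw [hsum_p, hsum_s]
        nlinarith [mul_le_mul_of_nonneg_right h1M
            (show (0:ℝ) ≤ 1 + ∑ i, (volume (P i ∩ S i)).toReal by linarith),
          mul_le_mul_of_nonneg_left hM1 hD0]
end
end

section
/- (Intermediate regularity lemma) For every ε > 0, every integer m₀ ≥ 1, every k ≥ 1, and every k-colored directed graphon W = (W^{(α,β)})_{α,β∈[k]}, there exists a measurable partition P of [0,1] into at most (16 m₀)^{2^{k⁴/ε²}} / 4 parts such that for every measurable partition Q of [0,1] into at most max{|P|, m₀} classes, Σ_{α,β=1}^k ‖W^{(α,β)} − (W^{(α,β)})_P‖_{□Q} ≤ ε. -/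
open MeasureTheory Set

noncomputable section

def IsColoredDigraphon (k : ℕ) (W : Fin k → Fin k → ℝ → ℝ → ℝ) : Prop :=
  (∀ α β, Measurable (Function.uncurry (W α β))) ∧
  (∀ α β x y, W α β x y ∈ Set.Icc (0:ℝ) 1) ∧
  (∀ α β x y, W α β x y = W β α y x) ∧
  (∀ x y, ∑ α, ∑ β, W α β x y = 1)

namespace IReg

lemma measI : MeasurableSet I01 := measurableSet_Icc

lemma volI : volume I01 = 1 := by simp [I01]

def Ker (U : ℝ → ℝ → ℝ) : Prop :=
  Measurable (Function.uncurry U) ∧ ∀ x y, U x y ∈ Set.Icc (0:ℝ) 1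

variable {U V : ℝ → ℝ → ℝ}

lemma Ker.measLeft (h : Ker U) (x : ℝ) : Measurable (U x) :=
  h.1.comp measurable_prodMk_left

lemma finvol {T : Set ℝ} (hT1 : T ⊆ I01) : volume T < ⊤ :=
  lt_of_le_of_lt (measure_mono hT1) (by simp [I01])

lemma Ker.intOn (h : Ker U) {T : Set ℝ} (hT1 : T ⊆ I01) (x : ℝ) :
    IntegrableOn (fun y => U x y) T := by
  have hc : IntegrableOn (fun _ => (1:ℝ)) T volume := integrableOn_const (finvol hT1).ne
  refine hc.mono' (h.measLeft x).aestronglyMeasurable ?_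
  filter_upwards with y
  have h1 := (h.2 x y).1
  have h2 := (h.2 x y).2
  rw [Real.norm_eq_abs, abs_le]
  exact ⟨by linarith, h2⟩

lemma Ker.measInt (h : Ker U) (T : Set ℝ) : Measurable fun x => ∫ y in T, U x y :=
  (h.1.stronglyMeasurable.integral_prod_right (ν := volume.restrict T)).measurable

lemma Ker.int_nonneg (h : Ker U) (T : Set ℝ) (x : ℝ) : 0 ≤ ∫ y in T, U x y :=
  setIntegral_nonneg_of_ae_restrict (Filter.Eventually.of_forall fun y => (h.2 x y).1)

lemma Ker.int_le_vol (h : Ker U) {T : Set ℝ} (hT : MeasurableSet T) (hT1 : T ⊆ I01) (x : ℝ) :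
    ∫ y in T, U x y ≤ (volume T).toReal := by
  calc ∫ y in T, U x y ≤ ∫ _ in T, (1:ℝ) := by
        have hc : IntegrableOn (fun _ => (1:ℝ)) T volume := integrableOn_const (finvol hT1).ne
        exact setIntegral_mono_on (h.intOn hT1 x) hc hT fun y _ => (h.2 x y).2
    _ = (volume T).toReal := by simp [Measure.real]

lemma Ker.int_le_one (h : Ker U) {T : Set ℝ} (hT : MeasurableSet T) (hT1 : T ⊆ I01) (x : ℝ) :
    ∫ y in T, U x y ≤ 1 := by
  refine (h.int_le_vol hT hT1 x).trans ?_
  have : volume T ≤ volume I01 := measure_mono hT1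
  rw [volI] at this
  rw [← ENNReal.ofReal_one] at this
  exact ENNReal.toReal_le_of_le_ofReal zero_le_one this

lemma Ker.intOn2 (h : Ker U) {T : Set ℝ} (hT : MeasurableSet T) (hT1 : T ⊆ I01)
    {S : Set ℝ} (hS1 : S ⊆ I01) : IntegrableOn (fun x => ∫ y in T, U x y) S := by
  have hc : IntegrableOn (fun _ => (1:ℝ)) S volume := integrableOn_const (finvol hS1).ne
  refine hc.mono' (h.measInt T).aestronglyMeasurable ?_
  filter_upwards with x
  rw [Real.norm_eq_abs, abs_le]
  exact ⟨by linarith [h.int_nonneg T x], h.int_le_one hT hT1 x⟩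

lemma intInt_nonneg (h : Ker U) {S : Set ℝ} (T : Set ℝ) :
    0 ≤ ∫ x in S, ∫ y in T, U x y :=
  setIntegral_nonneg_of_ae_restrict (Filter.Eventually.of_forall fun x => h.int_nonneg T x)

lemma intInt_sub (hU : Ker U) (hV : Ker V) {S T : Set ℝ} (hS : MeasurableSet S) (hS1 : S ⊆ I01)
    (hT : MeasurableSet T) (hT1 : T ⊆ I01) :
    ∫ x in S, ∫ y in T, (U x y - V x y) =
      (∫ x in S, ∫ y in T, U x y) - ∫ x in S, ∫ y in T, V x y := by
  have h1 : ∀ x : ℝ, ∫ y in T, (U x y - V x y) = (∫ y in T, U x y) - ∫ y in T, V x y :=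
    fun x => integral_sub (hU.intOn hT1 x) (hV.intOn hT1 x)
  simp_rw [h1]
  exact integral_sub (hU.intOn2 hT hT1 hS1) (hV.intOn2 hT hT1 hS1)

lemma intInt_biUnion_left (hU : Ker U) {σ : Type*} (s : Finset σ) (B : σ → Set ℝ)
    (hm : ∀ b ∈ s, MeasurableSet (B b)) (h1 : ∀ b ∈ s, B b ⊆ I01)
    (hd : Set.Pairwise s (Function.onFun Disjoint B)) {T : Set ℝ} (hT : MeasurableSet T) (hT1 : T ⊆ I01) :
    ∫ x in ⋃ b ∈ s, B b, ∫ y in T, U x y = ∑ b ∈ s, ∫ x in B b, ∫ y in T, U x y :=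
  integral_biUnion_finset s hm hd fun b hb => hU.intOn2 hT hT1 (h1 b hb)

lemma intInt_biUnion_right (hU : Ker U) {σ : Type*} (s : Finset σ) (B : σ → Set ℝ)
    (hm : ∀ b ∈ s, MeasurableSet (B b)) (h1 : ∀ b ∈ s, B b ⊆ I01)
    (hd : Set.Pairwise s (Function.onFun Disjoint B)) {S : Set ℝ} (hS1 : S ⊆ I01) :
    ∫ x in S, ∫ y in ⋃ b ∈ s, B b, U x y = ∑ b ∈ s, ∫ x in S, ∫ y in B b, U x y := by
  have h2 : ∀ x : ℝ, ∫ y in ⋃ b ∈ s, B b, U x y = ∑ b ∈ s, ∫ y in B b, U x y :=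
    fun x => integral_biUnion_finset s hm hd fun b hb => hU.intOn (h1 b hb) x
  simp_rw [h2]
  exact integral_finset_sum s fun b hb => hU.intOn2 (hm b hb) (h1 b hb) hS1

section Partition

variable {ι : Type*} [Fintype ι] {P : ι → Set ℝ} {x y : ℝ}

def mP (P : ι → Set ℝ) (i : ι) : ℝ := (volume (P i)).toReal

def IntP (U : ℝ → ℝ → ℝ) (P : ι → Set ℝ) (i j : ι) : ℝ := ∫ x in P i, ∫ y in P j, U x y

def cP (U : ℝ → ℝ → ℝ) (P : ι → Set ℝ) (i j : ι) : ℝ := IntP U P i j / mP P i / mP P j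

lemma mP_nonneg (P : ι → Set ℝ) (i : ι) : 0 ≤ mP P i := ENNReal.toReal_nonneg

lemma vol_eq_zero (hP : IsPartition P) {i : ι} (h : mP P i = 0) : volume (P i) = 0 := by
  rcases (ENNReal.toReal_eq_zero_iff _).1 h with h' | h'
  · exact h'
  · exact absurd h' (finvol (hP.2.1 i)).ne

lemma IntP_zero_left (U : ℝ → ℝ → ℝ) (hP : IsPartition P) {i : ι} (h : mP P i = 0) (j : ι) :
    IntP U P i j = 0 := by
  unfold IntP
  rw [Measure.restrict_eq_zero.2 (vol_eq_zero hP h), integral_zero_measure]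

lemma IntP_zero_right (U : ℝ → ℝ → ℝ) (hP : IsPartition P) {j : ι} (h : mP P j = 0) (i : ι) :
    IntP U P i j = 0 := by
  unfold IntP
  have : ∀ x : ℝ, ∫ y in P j, U x y = 0 := fun x => by
    rw [Measure.restrict_eq_zero.2 (vol_eq_zero hP h), integral_zero_measure]
  simp [this]

lemma IntP_nonneg (hU : Ker U) (P : ι → Set ℝ) (i j : ι) : 0 ≤ IntP U P i j :=
  intInt_nonneg hU _

lemma IntP_le (hU : Ker U) (hP : IsPartition P) (i j : ι) :
    IntP U P i j ≤ mP P i * mP P j := by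
  unfold IntP
  calc ∫ x in P i, ∫ y in P j, U x y ≤ ∫ _ in P i, mP P j := by
        have hc : IntegrableOn (fun _ => mP P j) (P i) volume :=
          integrableOn_const (finvol (hP.2.1 i)).ne
        exact setIntegral_mono_on (hU.intOn2 (hP.1 j) (hP.2.1 j) (hP.2.1 i)) hc (hP.1 i)
          fun x _ => hU.int_le_vol (hP.1 j) (hP.2.1 j) x
    _ = mP P i * mP P j := by simp [mP, smul_eq_mul, Measure.real]

lemma cP_nonneg (hU : Ker U) (P : ι → Set ℝ) (i j : ι) : 0 ≤ cP U P i j :=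
  div_nonneg (div_nonneg (IntP_nonneg hU P i j) (mP_nonneg P i)) (mP_nonneg P j)

lemma cP_le_one (hU : Ker U) (hP : IsPartition P) (i j : ι) : cP U P i j ≤ 1 := by
  rcases eq_or_lt_of_le (mP_nonneg P i) with hi | hi
  · simp [cP, IntP_zero_left U hP hi.symm]
  rcases eq_or_lt_of_le (mP_nonneg P j) with hj | hj
  · simp [cP, ← hj]
  rw [cP, div_le_one hj, div_le_iff₀ hi, mul_comm]
  exact IntP_le hU hP i j

lemma IntP_eq (hU : Ker U) (hP : IsPartition P) (i j : ι) :
    IntP U P i j = cP U P i j * mP P i * mP P j := by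
  rcases eq_or_lt_of_le (mP_nonneg P i) with hi | hi
  · rw [IntP_zero_left U hP hi.symm, ← hi]; ring
  rcases eq_or_lt_of_le (mP_nonneg P j) with hj | hj
  · rw [IntP_zero_right U hP hj.symm, ← hj]; ring
  rw [cP, div_div, mul_assoc, div_mul_cancel₀ _ (mul_pos hi hj).ne']

lemma mem_unique (hP : IsPartition P) {i j : ι} (hx : x ∈ P i) (hx' : x ∈ P j) : i = j := by
  by_contra h
  exact (hP.2.2.1 h).ne_of_mem hx hx' rfl

lemma exists_mem (hP : IsPartition P) (hx : x ∈ I01) : ∃ i, x ∈ P i := by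
  rw [← hP.2.2.2] at hx
  exact mem_iUnion.1 hx

lemma sum_ind_eval (hP : IsPartition P) {i0 j0 : ι} (hx : x ∈ P i0) (hy : y ∈ P j0)
    (f : ι → ι → ℝ) :
    (∑ i, ∑ j, (P i).indicator (fun _ => (1:ℝ)) x * (P j).indicator (fun _ => (1:ℝ)) y * f i j)
      = f i0 j0 := by
  rw [Finset.sum_eq_single i0]
  · rw [Finset.sum_eq_single j0]
    · rw [indicator_of_mem hx, indicator_of_mem hy]; ring
    · intro j _ hj
      rw [indicator_of_notMem fun h => hj (mem_unique hP h hy)]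
      ring
    · exact fun h => absurd (Finset.mem_univ j0) h
  · intro i _ hi
    refine Finset.sum_eq_zero fun j _ => ?_
    rw [indicator_of_notMem fun h => hi (mem_unique hP h hx)]
    ring
  · exact fun h => absurd (Finset.mem_univ i0) h

lemma sum_ind_zero_left (hP : IsPartition P) (hx : x ∉ I01) (f : ι → ι → ℝ) :
    (∑ i, ∑ j, (P i).indicator (fun _ => (1:ℝ)) x * (P j).indicator (fun _ => (1:ℝ)) y * f i j)
      = 0 := by
  refine Finset.sum_eq_zero fun i _ => Finset.sum_eq_zero fun j _ => ?_
  rw [indicator_of_notMem fun h => hx (hP.2.1 i h)]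
  ring

lemma sum_ind_zero_right (hP : IsPartition P) (hy : y ∉ I01) (f : ι → ι → ℝ) :
    (∑ i, ∑ j, (P i).indicator (fun _ => (1:ℝ)) x * (P j).indicator (fun _ => (1:ℝ)) y * f i j)
      = 0 := by
  refine Finset.sum_eq_zero fun i _ => Finset.sum_eq_zero fun j _ => ?_
  rw [indicator_of_notMem (s := P j) fun h => hy (hP.2.1 j h)]
  ring

lemma avgP_eq {U : ℝ → ℝ → ℝ} (hP : IsPartition P) {i0 j0 : ι} (hx : x ∈ P i0) (hy : y ∈ P j0) :
    avgP P U x y = cP U P i0 j0 :=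
  sum_ind_eval hP hx hy (cP U P)

lemma Ker.avg (hU : Ker U) (hP : IsPartition P) : Ker (avgP P U) := by
  constructor
  · have : Function.uncurry (avgP P U) = fun p : ℝ × ℝ =>
        ∑ i, ∑ j, (P i).indicator (fun _ => (1:ℝ)) p.1 * (P j).indicator (fun _ => (1:ℝ)) p.2 *
          cP U P i j := rfl
    rw [this]
    refine Finset.measurable_sum _ fun i _ => Finset.measurable_sum _ fun j _ => ?_
    exact (((measurable_const.indicator (hP.1 i)).comp measurable_fst).mul
      ((measurable_const.indicator (hP.1 j)).comp measurable_snd)).mul measurable_const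
  · intro x y
    by_cases hx : x ∈ I01
    · by_cases hy : y ∈ I01
      · obtain ⟨i0, hi0⟩ := exists_mem hP hx
        obtain ⟨j0, hj0⟩ := exists_mem hP hy
        rw [avgP_eq hP hi0 hj0]
        exact ⟨cP_nonneg hU P i0 j0, cP_le_one hU hP i0 j0⟩
      · rw [show avgP P U x y = 0 from sum_ind_zero_right hP hy _]
        exact ⟨le_refl 0, zero_le_one⟩
    · rw [show avgP P U x y = 0 from sum_ind_zero_left hP hx _]
      exact ⟨le_refl 0, zero_le_one⟩

lemma int_ind_mul {C D : Set ℝ} (hC : MeasurableSet C) (c : ℝ) :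
    ∫ y in D, C.indicator (fun _ => (1:ℝ)) y * c = (volume (C ∩ D)).toReal * c := by
  rw [integral_mul_const]
  congr 1
  rw [integral_indicator_const (1:ℝ) hC, measureReal_restrict_apply hC, smul_eq_mul, mul_one]
  rfl

lemma intOn_ind_mul {C D : Set ℝ} (hC : MeasurableSet C) (hC1 : C ⊆ I01) (c : ℝ) :
    IntegrableOn (fun y => C.indicator (fun _ => (1:ℝ)) y * c) D volume := by
  refine Integrable.mul_const ?_ c
  rw [integrable_indicator_iff hC]
  refine integrableOn_const (ne_of_lt ?_)
  exact lt_of_le_of_lt (le_trans (Measure.restrict_apply_le _ _) (measure_mono hC1))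
    (by simp [I01])

lemma intOn_atom {C D : Set ℝ} (hC : MeasurableSet C) (hC1 : C ⊆ I01) (a c : ℝ) :
    IntegrableOn (fun y => a * C.indicator (fun _ => (1:ℝ)) y * c) D volume := by
  have h : (fun y => a * C.indicator (fun _ => (1:ℝ)) y * c)
      = fun y => C.indicator (fun _ => (1:ℝ)) y * (a * c) := by funext y; ring
  rw [h]
  exact intOn_ind_mul hC hC1 _

lemma J_gridSum (hP : IsPartition P) (f : ι → ι → ℝ) {A B : Set ℝ}
    (hA : MeasurableSet A) (hB : MeasurableSet B) :
    (∫ x in A, ∫ y in B, (∑ i, ∑ j, (P i).indicator (fun _ => (1:ℝ)) x *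
        (P j).indicator (fun _ => (1:ℝ)) y * f i j))
      = ∑ i, ∑ j, (volume (P i ∩ A)).toReal * (volume (P j ∩ B)).toReal * f i j := by
  have inner : ∀ x : ℝ, (∫ y in B, (∑ i, ∑ j, (P i).indicator (fun _ => (1:ℝ)) x *
        (P j).indicator (fun _ => (1:ℝ)) y * f i j))
      = ∑ i, ∑ j, (P i).indicator (fun _ => (1:ℝ)) x *
          ((volume (P j ∩ B)).toReal * f i j) := by
    intro x
    rw [integral_finset_sum _ fun i _ => integrable_finset_sum _
      fun j _ => intOn_atom (hP.1 j) (hP.2.1 j) _ _]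
    refine Finset.sum_congr rfl fun i _ => ?_
    rw [integral_finset_sum _ fun j _ => intOn_atom (hP.1 j) (hP.2.1 j) _ _]
    refine Finset.sum_congr rfl fun j _ => ?_
    have h : (fun y => (P i).indicator (fun _ => (1:ℝ)) x *
          (P j).indicator (fun _ => (1:ℝ)) y * f i j)
        = fun y => (P i).indicator (fun _ => (1:ℝ)) x *
          ((P j).indicator (fun _ => (1:ℝ)) y * f i j) := by funext y; ring
    rw [h, integral_const_mul, int_ind_mul (hP.1 j)]
  simp_rw [inner]
  rw [integral_finset_sum _ fun i _ => integrable_finset_sum _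
    fun j _ => intOn_ind_mul (hP.1 i) (hP.2.1 i) _]
  refine Finset.sum_congr rfl fun i _ => ?_
  rw [integral_finset_sum _ fun j _ => intOn_ind_mul (hP.1 i) (hP.2.1 i) _]
  refine Finset.sum_congr rfl fun j _ => ?_
  rw [int_ind_mul (hP.1 i)]
  ring

lemma J_avgP (hP : IsPartition P) (U : ℝ → ℝ → ℝ) {A B : Set ℝ}
    (hA : MeasurableSet A) (hB : MeasurableSet B) :
    (∫ x in A, ∫ y in B, avgP P U x y)
      = ∑ i, ∑ j, (volume (P i ∩ A)).toReal * (volume (P j ∩ B)).toReal * cP U P i j :=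
  J_gridSum hP (cP U P) hA hB

lemma l2sq_avgP (hP : IsPartition P) (U : ℝ → ℝ → ℝ) :
    l2sq (avgP P U) = ∑ i, ∑ j, mP P i * mP P j * (cP U P i j)^2 := by
  have key : ∀ x ∈ I01, ∀ y ∈ I01, (avgP P U x y)^2
      = ∑ i, ∑ j, (P i).indicator (fun _ => (1:ℝ)) x * (P j).indicator (fun _ => (1:ℝ)) y *
          (cP U P i j)^2 := by
    intro x hx y hy
    obtain ⟨i0, hi0⟩ := exists_mem hP hx
    obtain ⟨j0, hj0⟩ := exists_mem hP hy
    rw [avgP_eq hP hi0 hj0, sum_ind_eval hP hi0 hj0 (fun i j => (cP U P i j)^2)]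
  have e1 : l2sq (avgP P U) = ∫ x in I01, ∫ y in I01,
      (∑ i, ∑ j, (P i).indicator (fun _ => (1:ℝ)) x * (P j).indicator (fun _ => (1:ℝ)) y *
        (cP U P i j)^2) := by
    unfold l2sq
    refine setIntegral_congr_fun measI fun x hx => ?_
    exact setIntegral_congr_fun measI fun y hy => key x hx y hy
  rw [e1, J_gridSum hP _ measI measI]
  refine Finset.sum_congr rfl fun i _ => Finset.sum_congr rfl fun j _ => ?_
  rw [inter_eq_self_of_subset_left (hP.2.1 i), inter_eq_self_of_subset_left (hP.2.1 j)]
  rfl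

lemma J_avgP_block (hP : IsPartition P) (U : ℝ → ℝ → ℝ) {A B : Set ℝ} {i0 j0 : ι}
    (hA : MeasurableSet A) (hB : MeasurableSet B) (hAs : A ⊆ P i0) (hBs : B ⊆ P j0) :
    (∫ x in A, ∫ y in B, avgP P U x y)
      = (volume A).toReal * (volume B).toReal * cP U P i0 j0 := by
  rw [J_avgP hP U hA hB]
  have hz : ∀ i : ι, i ≠ i0 → volume (P i ∩ A) = 0 := by
    intro i hi
    have : P i ∩ A = ∅ := by
      apply eq_empty_of_subset_empty
      intro x hx
      exact absurd (mem_unique hP hx.1 (hAs hx.2)) hi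
    simp [this]
  have hz' : ∀ j : ι, j ≠ j0 → volume (P j ∩ B) = 0 := by
    intro j hj
    have : P j ∩ B = ∅ := by
      apply eq_empty_of_subset_empty
      intro y hy
      exact absurd (mem_unique hP hy.1 (hBs hy.2)) hj
    simp [this]
  rw [Finset.sum_eq_single i0]
  · rw [Finset.sum_eq_single j0]
    · rw [inter_eq_self_of_subset_right hAs, inter_eq_self_of_subset_right hBs]
    · intro j _ hj; rw [hz' j hj]; simp
    · exact fun h => absurd (Finset.mem_univ j0) h
  · intro i _ hi
    refine Finset.sum_eq_zero fun j _ => ?_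
    rw [hz i hi]; simp
  · exact fun h => absurd (Finset.mem_univ i0) h

lemma sum_mP (hP : IsPartition P) : ∑ i, mP P i = 1 := by
  have h1 : volume (⋃ i, P i) = ∑' i, volume (P i) :=
    measure_iUnion hP.2.2.1 hP.1
  rw [hP.2.2.2, volI, tsum_fintype] at h1
  have h2 : ((1:ENNReal)).toReal = (∑ i, volume (P i)).toReal := by rw [← h1]
  rw [ENNReal.toReal_sum (fun i _ => (finvol (hP.2.1 i)).ne)] at h2
  simp at h2
  exact h2.symm

end Partition

section Grouping

variable {ι κ : Type*} [Fintype ι] [Fintype κ] [DecidableEq ι] {P : ι → Set ℝ} {R : κ → Set ℝ}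
  {g : κ → ι} {U : ℝ → ℝ → ℝ}

def fib [DecidableEq ι] (g : κ → ι) (i : ι) : Finset κ := Finset.univ.filter fun b => g b = i

lemma part_eq_biUnion (hP : IsPartition P) (hR : IsPartition R)
    (hg : ∀ b, R b ⊆ P (g b)) (i : ι) : P i = ⋃ b ∈ fib g i, R b := by
  ext x
  constructor
  · intro hx
    have hxI : x ∈ I01 := hP.2.1 i hx
    obtain ⟨b, hb⟩ := exists_mem hR hxI
    have : g b = i := mem_unique hP (hg b hb) hx
    exact mem_iUnion₂.2 ⟨b, by simp [fib, this], hb⟩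
  · intro hx
    obtain ⟨b, hb, hxb⟩ := mem_iUnion₂.1 hx
    have : g b = i := by simpa [fib] using hb
    exact this ▸ hg b hxb

lemma mP_additive (hP : IsPartition P) (hR : IsPartition R)
    (hg : ∀ b, R b ⊆ P (g b)) (i : ι) : mP P i = ∑ b ∈ fib g i, mP R b := by
  have h1 : volume (P i) = ∑ b ∈ fib g i, volume (R b) := by
    rw [part_eq_biUnion hP hR hg i]
    exact measure_biUnion_finset
      (fun b _ b' _ hbb => hR.2.2.1 hbb) (fun b _ => hR.1 b)
  rw [mP, h1, ENNReal.toReal_sum (fun b _ => (finvol (hR.2.1 b)).ne)]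
  rfl

lemma IntP_additive (hU : Ker U) (hP : IsPartition P) (hR : IsPartition R)
    (hg : ∀ b, R b ⊆ P (g b)) (i j : ι) :
    IntP U P i j = ∑ b ∈ fib g i, ∑ b' ∈ fib g j, IntP U R b b' := by
  unfold IntP
  rw [part_eq_biUnion hP hR hg i, part_eq_biUnion hP hR hg j]
  rw [intInt_biUnion_left hU _ _ (fun b _ => hR.1 b) (fun b _ => hR.2.1 b)
    (fun b _ b' _ hbb => hR.2.2.1 hbb) (Finset.measurableSet_biUnion _ fun b _ => hR.1 b)
    (iUnion₂_subset fun b _ => hR.2.1 b)]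
  refine Finset.sum_congr rfl fun b _ => ?_
  exact intInt_biUnion_right hU _ _ (fun b _ => hR.1 b) (fun b _ => hR.2.1 b)
    (fun b _ b' _ hbb => hR.2.2.1 hbb) (hR.2.1 b)

lemma energy_diff (hU : Ker U) (hP : IsPartition P) (hR : IsPartition R)
    (hg : ∀ b, R b ⊆ P (g b)) :
    (∑ b, ∑ b', mP R b * mP R b' * (cP U R b b' - cP U P (g b) (g b'))^2)
      = l2sq (avgP R U) - l2sq (avgP P U) := by
  have fibsum : ∀ F : κ → κ → ℝ, (∑ b, ∑ b', F b b')
      = ∑ i, ∑ j, ∑ b ∈ fib g i, ∑ b' ∈ fib g j, F b b' := by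
    intro F
    have h1 : (∑ b : κ, ∑ b', F b b') = ∑ i : ι, ∑ b ∈ fib g i, ∑ b', F b b' :=
      (Finset.sum_fiberwise_of_maps_to (fun b _ => Finset.mem_univ (g b)) _).symm
    rw [h1]
    refine Finset.sum_congr rfl fun i _ => ?_
    have h2 : ∀ b : κ, (∑ b' : κ, F b b') = ∑ j : ι, ∑ b' ∈ fib g j, F b b' := fun b =>
      (Finset.sum_fiberwise_of_maps_to (fun b' _ => Finset.mem_univ (g b')) _).symm
    simp_rw [h2]
    exact Finset.sum_comm
  have cross : (∑ b, ∑ b', mP R b * mP R b' * (cP U R b b' * cP U P (g b) (g b')))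
      = ∑ i, ∑ j, mP P i * mP P j * (cP U P i j)^2 := by
    rw [fibsum]
    refine Finset.sum_congr rfl fun i _ => Finset.sum_congr rfl fun j _ => ?_
    have e1 : ∀ b ∈ fib g i, ∀ b' ∈ fib g j,
        mP R b * mP R b' * (cP U R b b' * cP U P (g b) (g b'))
          = IntP U R b b' * cP U P i j := by
      intro b hb b' hb'
      have hgb : g b = i := by simpa [fib] using hb
      have hgb' : g b' = j := by simpa [fib] using hb'
      rw [hgb, hgb', IntP_eq hU hR b b']
      ring
    calc (∑ b ∈ fib g i, ∑ b' ∈ fib g j,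
            mP R b * mP R b' * (cP U R b b' * cP U P (g b) (g b')))
        = ∑ b ∈ fib g i, ∑ b' ∈ fib g j, IntP U R b b' * cP U P i j := by
          refine Finset.sum_congr rfl fun b hb => Finset.sum_congr rfl fun b' hb' =>
            e1 b hb b' hb'
      _ = (∑ b ∈ fib g i, ∑ b' ∈ fib g j, IntP U R b b') * cP U P i j := by
          rw [Finset.sum_mul]
          exact Finset.sum_congr rfl fun b _ => (Finset.sum_mul _ _ _).symm
      _ = IntP U P i j * cP U P i j := by rw [← IntP_additive hU hP hR hg i j]
      _ = mP P i * mP P j * (cP U P i j)^2 := by rw [IntP_eq hU hP i j]; ring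
  have third : (∑ b, ∑ b', mP R b * mP R b' * (cP U P (g b) (g b'))^2)
      = ∑ i, ∑ j, mP P i * mP P j * (cP U P i j)^2 := by
    rw [fibsum]
    refine Finset.sum_congr rfl fun i _ => Finset.sum_congr rfl fun j _ => ?_
    have e1 : ∀ b ∈ fib g i, ∀ b' ∈ fib g j,
        mP R b * mP R b' * (cP U P (g b) (g b'))^2
          = mP R b * mP R b' * (cP U P i j)^2 := by
      intro b hb b' hb'
      have hgb : g b = i := by simpa [fib] using hb
      have hgb' : g b' = j := by simpa [fib] using hb'
      rw [hgb, hgb']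
    calc (∑ b ∈ fib g i, ∑ b' ∈ fib g j, mP R b * mP R b' * (cP U P (g b) (g b'))^2)
        = ∑ b ∈ fib g i, ∑ b' ∈ fib g j, mP R b * mP R b' * (cP U P i j)^2 := by
          refine Finset.sum_congr rfl fun b hb => Finset.sum_congr rfl fun b' hb' =>
            e1 b hb b' hb'
      _ = mP P i * mP P j * (cP U P i j)^2 := by
          rw [mP_additive hP hR hg i, mP_additive hP hR hg j, Finset.sum_mul_sum]
          rw [Finset.sum_mul]
          refine Finset.sum_congr rfl fun b _ => ?_
          rw [Finset.sum_mul]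
  have expand : (∑ b, ∑ b', mP R b * mP R b' * (cP U R b b' - cP U P (g b) (g b'))^2)
      = (∑ b, ∑ b', mP R b * mP R b' * (cP U R b b')^2)
        - 2 * (∑ b, ∑ b', mP R b * mP R b' * (cP U R b b' * cP U P (g b) (g b')))
        + (∑ b, ∑ b', mP R b * mP R b' * (cP U P (g b) (g b'))^2) := by
    rw [Finset.mul_sum, ← Finset.sum_sub_distrib, ← Finset.sum_add_distrib]
    refine Finset.sum_congr rfl fun b _ => ?_
    rw [Finset.mul_sum, ← Finset.sum_sub_distrib, ← Finset.sum_add_distrib]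
    refine Finset.sum_congr rfl fun b' _ => ?_
    ring
  rw [expand, cross, third, l2sq_avgP hR U, l2sq_avgP hP U]
  ring

end Grouping

section CS

variable {κ : Type*} [Fintype κ] {R : κ → Set ℝ}

lemma cs_ineq (hR : IsPartition R) (Δ : κ → κ → ℝ) :
    (∑ b, ∑ b', mP R b * mP R b' * |Δ b b'|)^2 ≤ ∑ b, ∑ b', mP R b * mP R b' * (Δ b b')^2 := by
  have hmm : ∀ p : κ × κ, 0 ≤ mP R p.1 * mP R p.2 :=
    fun p => mul_nonneg (mP_nonneg _ _) (mP_nonneg _ _)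
  have key := Finset.sum_mul_sq_le_sq_mul_sq Finset.univ
    (fun p : κ × κ => Real.sqrt (mP R p.1 * mP R p.2))
    (fun p : κ × κ => Real.sqrt (mP R p.1 * mP R p.2) * |Δ p.1 p.2|)
  have e1 : (∑ p : κ × κ, Real.sqrt (mP R p.1 * mP R p.2) *
      (Real.sqrt (mP R p.1 * mP R p.2) * |Δ p.1 p.2|))
      = ∑ b, ∑ b', mP R b * mP R b' * |Δ b b'| := by
    rw [Fintype.sum_prod_type]
    refine Finset.sum_congr rfl fun b _ => Finset.sum_congr rfl fun b' _ => ?_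
    rw [← mul_assoc, Real.mul_self_sqrt (hmm (b, b'))]
  have e2 : (∑ p : κ × κ, Real.sqrt (mP R p.1 * mP R p.2) ^ 2) = 1 := by
    have : (∑ p : κ × κ, Real.sqrt (mP R p.1 * mP R p.2) ^ 2)
        = ∑ b, ∑ b', mP R b * mP R b' := by
      rw [Fintype.sum_prod_type]
      exact Finset.sum_congr rfl fun b _ => Finset.sum_congr rfl fun b' _ =>
        Real.sq_sqrt (hmm (b, b'))
    rw [this, ← Finset.sum_mul_sum, sum_mP hR, one_mul]
  have e3 : (∑ p : κ × κ, (Real.sqrt (mP R p.1 * mP R p.2) * |Δ p.1 p.2|) ^ 2)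
      = ∑ b, ∑ b', mP R b * mP R b' * (Δ b b')^2 := by
    rw [Fintype.sum_prod_type]
    refine Finset.sum_congr rfl fun b _ => Finset.sum_congr rfl fun b' _ => ?_
    rw [mul_pow, Real.sq_sqrt (hmm (b, b')), sq_abs]
  rw [e1, e2, e3, one_mul] at key
  exact key

end CS

section Swap

lemma sum_swap4 {A A' B B' : Type*} [Fintype A] [Fintype A'] [Fintype B] [Fintype B']
    (G : A → A' → B → B' → ℝ) :
    (∑ a, ∑ a', ∑ b, ∑ b', G a a' b b') = ∑ b, ∑ b', ∑ a, ∑ a', G a a' b b' := by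
  have h1 : ∀ a : A, (∑ a', ∑ b, ∑ b', G a a' b b')
      = ∑ b, ∑ b', ∑ a', G a a' b b' := by
    intro a
    rw [Finset.sum_comm]
    exact Finset.sum_congr rfl fun b _ => Finset.sum_comm
  simp_rw [h1]
  rw [Finset.sum_comm]
  exact Finset.sum_congr rfl fun b _ => Finset.sum_comm

end Swap

section Energy

variable {k : ℕ} {W : Fin k → Fin k → ℝ → ℝ → ℝ}

def Energy (W : Fin k → Fin k → ℝ → ℝ → ℝ) {ι : Type*} [Fintype ι] (P : ι → Set ℝ) : ℝ :=
  ∑ α, ∑ β, l2sq (avgP P (W α β))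

lemma Ker_of (hW : IsColoredDigraphon k W) (α β : Fin k) : Ker (W α β) :=
  ⟨hW.1 α β, fun x y => hW.2.1 α β x y⟩

variable {ι : Type*} [Fintype ι] {P : ι → Set ℝ}

lemma energy_nonneg (hW : IsColoredDigraphon k W) (hP : IsPartition P) : 0 ≤ Energy W P := by
  refine Finset.sum_nonneg fun α _ => Finset.sum_nonneg fun β _ => ?_
  rw [l2sq_avgP hP]
  refine Finset.sum_nonneg fun i _ => Finset.sum_nonneg fun j _ => ?_
  exact mul_nonneg (mul_nonneg (mP_nonneg P i) (mP_nonneg P j)) (sq_nonneg _)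

lemma sum_IntP (hW : IsColoredDigraphon k W) (hP : IsPartition P) (i j : ι) :
    (∑ α, ∑ β, IntP (W α β) P i j) = mP P i * mP P j := by
  have inner : ∀ x : ℝ, (∑ α, ∑ β, ∫ y in P j, W α β x y) = mP P j := by
    intro x
    have h1 : (∑ α, ∑ β, ∫ y in P j, W α β x y) = ∫ y in P j, ∑ α, ∑ β, W α β x y := by
      rw [integral_finset_sum _ fun α _ => integrable_finset_sum _
        fun β _ => (Ker_of hW α _).intOn (hP.2.1 j) x]
      exact Finset.sum_congr rfl fun α _ =>
        (integral_finset_sum _ fun β _ => (Ker_of hW α β).intOn (hP.2.1 j) x).symm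
    rw [h1]
    have h2 : ∀ y : ℝ, (∑ α, ∑ β, W α β x y) = 1 := fun y => hW.2.2.2 x y
    simp_rw [h2]
    simp [mP, Measure.real]
  have h3 : (∑ α, ∑ β, IntP (W α β) P i j)
      = ∫ x in P i, (∑ α, ∑ β, ∫ y in P j, W α β x y) := by
    unfold IntP
    rw [integral_finset_sum _ fun α _ => integrable_finset_sum _
      fun β _ => (Ker_of hW α _).intOn2 (hP.1 j) (hP.2.1 j) (hP.2.1 i)]
    exact Finset.sum_congr rfl fun α _ =>
      (integral_finset_sum _ fun β _ =>
        (Ker_of hW α β).intOn2 (hP.1 j) (hP.2.1 j) (hP.2.1 i)).symm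
  rw [h3]
  simp_rw [inner]
  simp [mP, mul_comm, Measure.real]

lemma sum_cP_le_one (hW : IsColoredDigraphon k W) (hP : IsPartition P) (i j : ι) :
    (∑ α, ∑ β, cP (W α β) P i j) ≤ 1 := by
  rcases eq_or_lt_of_le (mP_nonneg P i) with hi | hi
  · have : ∀ α β, cP (W α β) P i j = 0 := by
      intro α β
      rw [cP, IntP_zero_left _ hP hi.symm, zero_div, zero_div]
    simp [this]
  rcases eq_or_lt_of_le (mP_nonneg P j) with hj | hj
  · have : ∀ α β, cP (W α β) P i j = 0 := by
      intro α β
      rw [cP, IntP_zero_right _ hP hj.symm, zero_div, zero_div]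
    simp [this]
  have e1 : (∑ α, ∑ β, cP (W α β) P i j)
      = (∑ α, ∑ β, IntP (W α β) P i j) / mP P i / mP P j := by
    rw [Finset.sum_div, Finset.sum_div]
    exact Finset.sum_congr rfl fun α _ => by
      rw [Finset.sum_div, Finset.sum_div]
      exact Finset.sum_congr rfl fun β _ => rfl
  rw [e1, sum_IntP hW hP i j]
  rw [mul_comm, mul_div_assoc, div_self hi.ne', mul_one, div_self hj.ne']

lemma energy_le_one (hW : IsColoredDigraphon k W) (hP : IsPartition P) : Energy W P ≤ 1 := by
  have e1 : Energy W P = ∑ i, ∑ j, ∑ α, ∑ β, mP P i * mP P j * (cP (W α β) P i j)^2 := by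
    unfold Energy
    rw [← sum_swap4 (fun α β i j => mP P i * mP P j * (cP (W α β) P i j)^2)]
    exact Finset.sum_congr rfl fun α _ => Finset.sum_congr rfl fun β _ => l2sq_avgP hP _
  rw [e1]
  have e2 : ∀ i j : ι, (∑ α, ∑ β, mP P i * mP P j * (cP (W α β) P i j)^2)
      ≤ mP P i * mP P j := by
    intro i j
    have h1 : (∑ α, ∑ β, mP P i * mP P j * (cP (W α β) P i j)^2)
        = mP P i * mP P j * (∑ α, ∑ β, (cP (W α β) P i j)^2) := by
      rw [Finset.mul_sum]
      exact Finset.sum_congr rfl fun α _ => by rw [Finset.mul_sum]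
    rw [h1]
    have h2 : (∑ α, ∑ β, (cP (W α β) P i j)^2) ≤ 1 := by
      refine le_trans ?_ (sum_cP_le_one hW hP i j)
      refine Finset.sum_le_sum fun α _ => Finset.sum_le_sum fun β _ => ?_
      have h0 := cP_nonneg (Ker_of hW α β) P i j
      have h1' := cP_le_one (Ker_of hW α β) hP i j
      nlinarith
    calc mP P i * mP P j * (∑ α, ∑ β, (cP (W α β) P i j)^2)
        ≤ mP P i * mP P j * 1 := by
          refine mul_le_mul_of_nonneg_left h2 ?_
          exact mul_nonneg (mP_nonneg P i) (mP_nonneg P j)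
      _ = mP P i * mP P j := mul_one _
  calc (∑ i, ∑ j, ∑ α, ∑ β, mP P i * mP P j * (cP (W α β) P i j)^2)
      ≤ ∑ i, ∑ j, mP P i * mP P j :=
        Finset.sum_le_sum fun i _ => Finset.sum_le_sum fun j _ => e2 i j
    _ = 1 := by rw [← Finset.sum_mul_sum, sum_mP hP, one_mul]

end Energy

section Reindex

variable {ι κ : Type*} [Fintype ι] [Fintype κ]

lemma avgP_reindex (e : κ ≃ ι) (P : ι → Set ℝ) (U : ℝ → ℝ → ℝ) :
    avgP (P ∘ e) U = avgP P U := by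
  funext x y
  unfold avgP
  refine Fintype.sum_equiv e _ _ fun i => ?_
  exact Fintype.sum_equiv e _ _ fun j => rfl

lemma IsPartition_reindex (e : κ ≃ ι) {P : ι → Set ℝ} (hP : IsPartition P) :
    IsPartition (P ∘ e) := by
  refine ⟨fun i => hP.1 (e i), fun i => hP.2.1 (e i), ?_, ?_⟩
  · intro i j hij
    exact hP.2.2.1 (fun h => hij (e.injective h))
  · rw [← hP.2.2.2]
    ext x
    simp only [mem_iUnion, Function.comp_apply]
    exact ⟨fun ⟨i, h⟩ => ⟨e i, h⟩, fun ⟨i, h⟩ => ⟨e.symm i, by simpa using h⟩⟩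

lemma Energy_reindex {k : ℕ} (W : Fin k → Fin k → ℝ → ℝ → ℝ) (e : κ ≃ ι) (P : ι → Set ℝ) :
    Energy W (P ∘ e) = Energy W P := by
  unfold Energy
  refine Finset.sum_congr rfl fun α _ => Finset.sum_congr rfl fun β _ => ?_
  rw [avgP_reindex e P (W α β)]

end Reindex

section Refinement

variable {t t' : ℕ} {P : Fin t → Set ℝ} {Q : Fin t' → Set ℝ} {S T : Fin t' → Set ℝ}

def Ref (P : Fin t → Set ℝ) (Q S T : Fin t' → Set ℝ) :
    (Fin t × Fin t' × Bool × Bool) → Set ℝ := fun z =>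
  (P z.1 ∩ Q z.2.1) ∩ ((cond z.2.2.1 (S z.2.1) (Q z.2.1 \ S z.2.1))
    ∩ (cond z.2.2.2 (T z.2.1) (Q z.2.1 \ T z.2.1)))

lemma Ref_subset_P (z : Fin t × Fin t' × Bool × Bool) : Ref P Q S T z ⊆ P z.1 :=
  fun _ hx => hx.1.1

lemma Ref_isPartition (hP : IsPartition P) (hQ : IsPartition Q)
    (hS : ∀ i, MeasurableSet (S i) ∧ S i ⊆ Q i)
    (hT : ∀ i, MeasurableSet (T i) ∧ T i ⊆ Q i) :
    IsPartition (Ref P Q S T) := by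
  refine ⟨?_, ?_, ?_, ?_⟩
  · rintro ⟨p, i, bs, bt⟩
    refine ((hP.1 p).inter (hQ.1 i)).inter (MeasurableSet.inter ?_ ?_)
    · cases bs
      · exact (hQ.1 i).diff (hS i).1
      · exact (hS i).1
    · cases bt
      · exact (hQ.1 i).diff (hT i).1
      · exact (hT i).1
  · rintro ⟨p, i, bs, bt⟩
    exact fun x hx => hP.2.1 p hx.1.1
  · rintro ⟨p, i, bs, bt⟩ ⟨p', i', bs', bt'⟩ hne
    by_cases hp : p = p'
    · by_cases hi : i = i'
      · subst hp; subst hi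
        by_cases hbs : bs = bs'
        · subst hbs
          have hbt : bt ≠ bt' := by
            intro h; exact hne (by rw [h])
          refine Set.disjoint_left.2 fun x hx hx' => ?_
          cases bt
          · cases bt'
            · exact hbt rfl
            · exact hx.2.2.2 (hx'.2.2)
          · cases bt'
            · exact hx'.2.2.2 (hx.2.2)
            · exact hbt rfl
        · refine Set.disjoint_left.2 fun x hx hx' => ?_
          cases bs
          · cases bs'
            · exact hbs rfl
            · exact hx.2.1.2 (hx'.2.1)
          · cases bs'
            · exact hx'.2.1.2 (hx.2.1)
            · exact hbs rfl
      · exact Set.disjoint_left.2 fun x hx hx' =>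
          (hQ.2.2.1 hi).ne_of_mem hx.1.2 hx'.1.2 rfl
    · exact Set.disjoint_left.2 fun x hx hx' =>
        (hP.2.2.1 hp).ne_of_mem hx.1.1 hx'.1.1 rfl
  · apply Set.Subset.antisymm
    · rintro x ⟨s, ⟨⟨p, i, bs, bt⟩, rfl⟩, hx⟩
      exact hP.2.1 p hx.1.1
    · intro x hx
      obtain ⟨p, hp⟩ := exists_mem hP hx
      obtain ⟨i, hi⟩ := exists_mem hQ hx
      by_cases hs : x ∈ S i <;> by_cases ht : x ∈ T i
      · exact mem_iUnion.2 ⟨(p, i, true, true), ⟨⟨hp, hi⟩, hs, ht⟩⟩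
      · exact mem_iUnion.2 ⟨(p, i, true, false), ⟨⟨hp, hi⟩, hs, ⟨hi, ht⟩⟩⟩
      · exact mem_iUnion.2 ⟨(p, i, false, true), ⟨⟨hp, hi⟩, ⟨hi, hs⟩, ht⟩⟩
      · exact mem_iUnion.2 ⟨(p, i, false, false), ⟨⟨hp, hi⟩, ⟨hi, hs⟩, ⟨hi, ht⟩⟩⟩

lemma S_eq_biUnion (hP : IsPartition P) (hQ : IsPartition Q)
    (hS : ∀ i, S i ⊆ Q i) (i : Fin t') :
    S i = ⋃ u ∈ (Finset.univ : Finset (Fin t × Bool)), Ref P Q S T (u.1, i, true, u.2) := by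
  apply Set.Subset.antisymm
  · intro x hx
    have hxI : x ∈ I01 := hQ.2.1 i (hS i hx)
    obtain ⟨p, hp⟩ := exists_mem hP hxI
    by_cases ht : x ∈ T i
    · exact mem_biUnion (Finset.mem_univ ((p, true) : Fin t × Bool))
        ⟨⟨hp, hS i hx⟩, hx, ht⟩
    · exact mem_biUnion (Finset.mem_univ ((p, false) : Fin t × Bool))
        ⟨⟨hp, hS i hx⟩, hx, ⟨hS i hx, ht⟩⟩
  · intro x hx
    obtain ⟨u, _, hxu⟩ := mem_iUnion₂.1 hx
    exact hxu.2.1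

lemma T_eq_biUnion (hP : IsPartition P) (hQ : IsPartition Q)
    (hS : ∀ i, S i ⊆ Q i) (hT : ∀ i, T i ⊆ Q i) (j : Fin t') :
    T j = ⋃ u ∈ (Finset.univ : Finset (Fin t × Bool)), Ref P Q S T (u.1, j, u.2, true) := by
  apply Set.Subset.antisymm
  · intro x hx
    have hxI : x ∈ I01 := hQ.2.1 j (hT j hx)
    obtain ⟨p, hp⟩ := exists_mem hP hxI
    by_cases hs : x ∈ S j
    · exact mem_biUnion (Finset.mem_univ ((p, true) : Fin t × Bool))
        ⟨⟨hp, hT j hx⟩, hs, hx⟩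
    · exact mem_biUnion (Finset.mem_univ ((p, false) : Fin t × Bool))
        ⟨⟨hp, hT j hx⟩, ⟨hT j hx, hs⟩, hx⟩
  · intro x hx
    obtain ⟨u, _, hxu⟩ := mem_iUnion₂.1 hx
    exact hxu.2.2

lemma sum_le_of_inj {A B : Type*} [Fintype A] [Fintype B] [DecidableEq B] (φ : A → B)
    (hφ : Function.Injective φ) (G : B → ℝ) (hG : ∀ b, 0 ≤ G b) :
    (∑ a, G (φ a)) ≤ ∑ b, G b := by
  rw [← Finset.sum_image (f := G) (g := φ) (fun a _ b _ h => hφ h)]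
  exact Finset.sum_le_sum_of_subset_of_nonneg (Finset.subset_univ _) fun b _ _ => hG b

variable {U : ℝ → ℝ → ℝ}

lemma cut_block (hU : Ker U) (hP : IsPartition P) (hQ : IsPartition Q)
    (hS : ∀ i, MeasurableSet (S i) ∧ S i ⊆ Q i)
    (hT : ∀ i, MeasurableSet (T i) ∧ T i ⊆ Q i) (i j : Fin t') :
    |∫ x in S i, ∫ y in T j, (U x y - avgP P U x y)| ≤
      ∑ u : Fin t × Bool, ∑ v : Fin t × Bool,
        mP (Ref P Q S T) (u.1, i, true, u.2) * mP (Ref P Q S T) (v.1, j, v.2, true) *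
          |cP U (Ref P Q S T) (u.1, i, true, u.2) (v.1, j, v.2, true) - cP U P u.1 v.1| := by
  set R := Ref P Q S T with hRdef
  have hR : IsPartition R := Ref_isPartition hP hQ hS hT
  have hSm : MeasurableSet (S i) := (hS i).1
  have hSsub : S i ⊆ I01 := fun x hx => hQ.2.1 i ((hS i).2 hx)
  have hTm : MeasurableSet (T j) := (hT j).1
  have hTsub : T j ⊆ I01 := fun x hx => hQ.2.1 j ((hT j).2 hx)
  have hRdisj : ∀ f : (Fin t × Bool) → (Fin t × Fin t' × Bool × Bool),
      Function.Injective f →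
      Set.Pairwise (Finset.univ : Finset (Fin t × Bool)) (Function.onFun Disjoint fun u => R (f u)) := by
    intro f hf u _ v _ huv
    exact hR.2.2.1 fun h => huv (hf h)
  have hinjS : Function.Injective fun u : Fin t × Bool => ((u.1, i, true, u.2) :
      Fin t × Fin t' × Bool × Bool) := by
    intro a b h
    simp only [Prod.mk.injEq] at h
    exact Prod.ext h.1 h.2.2.2
  have hinjT : Function.Injective fun u : Fin t × Bool => ((u.1, j, u.2, true) :
      Fin t × Fin t' × Bool × Bool) := by
    intro a b h
    simp only [Prod.mk.injEq] at h
    exact Prod.ext h.1 h.2.2.1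
  have hUsplit : (∫ x in S i, ∫ y in T j, U x y)
      = ∑ u : Fin t × Bool, ∑ v : Fin t × Bool,
          IntP U R (u.1, i, true, u.2) (v.1, j, v.2, true) := by
    rw [S_eq_biUnion hP hQ (fun i' => (hS i').2) i,
      T_eq_biUnion hP hQ (fun i' => (hS i').2) (fun i' => (hT i').2) j]
    rw [intInt_biUnion_left hU _ _ (fun u _ => hR.1 _) (fun u _ => hR.2.1 _)
      (hRdisj _ hinjS) (Finset.measurableSet_biUnion _ fun u _ => hR.1 _)
      (iUnion₂_subset fun u _ => hR.2.1 _)]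
    refine Finset.sum_congr rfl fun u _ => ?_
    exact intInt_biUnion_right hU _ _ (fun v _ => hR.1 _) (fun v _ => hR.2.1 _)
      (hRdisj _ hinjT) (hR.2.1 _)
  have hAsplit : (∫ x in S i, ∫ y in T j, avgP P U x y)
      = ∑ u : Fin t × Bool, ∑ v : Fin t × Bool,
          mP R (u.1, i, true, u.2) * mP R (v.1, j, v.2, true) * cP U P u.1 v.1 := by
    have hKa : Ker (avgP P U) := hU.avg hP
    rw [S_eq_biUnion hP hQ (fun i' => (hS i').2) i,
      T_eq_biUnion hP hQ (fun i' => (hS i').2) (fun i' => (hT i').2) j]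
    rw [intInt_biUnion_left hKa _ _ (fun u _ => hR.1 _) (fun u _ => hR.2.1 _)
      (hRdisj _ hinjS) (Finset.measurableSet_biUnion _ fun u _ => hR.1 _)
      (iUnion₂_subset fun u _ => hR.2.1 _)]
    refine Finset.sum_congr rfl fun u _ => ?_
    rw [intInt_biUnion_right hKa _ _ (fun v _ => hR.1 _) (fun v _ => hR.2.1 _)
      (hRdisj _ hinjT) (hR.2.1 _)]
    refine Finset.sum_congr rfl fun v _ => ?_
    exact J_avgP_block hP U (hR.1 _) (hR.1 _) (Ref_subset_P _) (Ref_subset_P _)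
  rw [intInt_sub hU (hU.avg hP) hSm hSsub hTm hTsub, hUsplit, hAsplit,
    ← Finset.sum_sub_distrib]
  have step1 : ∀ u : Fin t × Bool,
      ((∑ v : Fin t × Bool, IntP U R (u.1, i, true, u.2) (v.1, j, v.2, true))
        - ∑ v : Fin t × Bool,
            mP R (u.1, i, true, u.2) * mP R (v.1, j, v.2, true) * cP U P u.1 v.1)
      = ∑ v : Fin t × Bool, (IntP U R (u.1, i, true, u.2) (v.1, j, v.2, true)
          - mP R (u.1, i, true, u.2) * mP R (v.1, j, v.2, true) * cP U P u.1 v.1) := by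
    intro u; rw [← Finset.sum_sub_distrib]
  refine le_trans (Finset.abs_sum_le_sum_abs _ _) ?_
  refine Finset.sum_le_sum fun u _ => ?_
  rw [step1 u]
  refine le_trans (Finset.abs_sum_le_sum_abs _ _) ?_
  refine Finset.sum_le_sum fun v _ => ?_
  rw [IntP_eq hU hR]
  have e : cP U R (u.1, i, true, u.2) (v.1, j, v.2, true) * mP R (u.1, i, true, u.2) *
        mP R (v.1, j, v.2, true)
      - mP R (u.1, i, true, u.2) * mP R (v.1, j, v.2, true) * cP U P u.1 v.1
      = (mP R (u.1, i, true, u.2) * mP R (v.1, j, v.2, true)) *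
        (cP U R (u.1, i, true, u.2) (v.1, j, v.2, true) - cP U P u.1 v.1) := by ring
  rw [e, abs_mul, abs_of_nonneg (mul_nonneg (mP_nonneg _ _) (mP_nonneg _ _)), mul_assoc]

lemma key_cut (hU : Ker U) (hP : IsPartition P) (hQ : IsPartition Q)
    (hS : ∀ i, MeasurableSet (S i) ∧ S i ⊆ Q i)
    (hT : ∀ i, MeasurableSet (T i) ∧ T i ⊆ Q i) :
    (∑ i, ∑ j, |∫ x in S i, ∫ y in T j, (U x y - avgP P U x y)|) ≤
      ∑ z : Fin t × Fin t' × Bool × Bool, ∑ z' : Fin t × Fin t' × Bool × Bool,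
        mP (Ref P Q S T) z * mP (Ref P Q S T) z' *
          |cP U (Ref P Q S T) z z' - cP U P z.1 z'.1| := by
  set R := Ref P Q S T with hRdef
  set G : (Fin t × Fin t' × Bool × Bool) × (Fin t × Fin t' × Bool × Bool) → ℝ :=
    fun v => mP R v.1 * mP R v.2 * |cP U R v.1 v.2 - cP U P v.1.1 v.2.1| with hGdef
  have hGnn : ∀ v, 0 ≤ G v := fun v =>
    mul_nonneg (mul_nonneg (mP_nonneg _ _) (mP_nonneg _ _)) (abs_nonneg _)
  set φ : (Fin t' × (Fin t × Bool)) × (Fin t' × (Fin t × Bool)) →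
      (Fin t × Fin t' × Bool × Bool) × (Fin t × Fin t' × Bool × Bool) :=
    fun w => ((w.1.2.1, w.1.1, true, w.1.2.2), (w.2.2.1, w.2.1, w.2.2.2, true)) with hφdef
  have hφinj : Function.Injective φ := by
    have : Function.LeftInverse (fun z : (Fin t × Fin t' × Bool × Bool) ×
        (Fin t × Fin t' × Bool × Bool) =>
        (((z.1.2.1, (z.1.1, z.1.2.2.2)) : Fin t' × (Fin t × Bool)),
         ((z.2.2.1, (z.2.1, z.2.2.2.1)) : Fin t' × (Fin t × Bool)))) φ := fun w => rfl
    exact this.injective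
  calc (∑ i, ∑ j, |∫ x in S i, ∫ y in T j, (U x y - avgP P U x y)|)
      ≤ ∑ i, ∑ j, ∑ u : Fin t × Bool, ∑ v : Fin t × Bool,
          mP R (u.1, i, true, u.2) * mP R (v.1, j, v.2, true) *
            |cP U R (u.1, i, true, u.2) (v.1, j, v.2, true) - cP U P u.1 v.1| :=
        Finset.sum_le_sum fun i _ => Finset.sum_le_sum fun j _ =>
          cut_block hU hP hQ hS hT i j
    _ = ∑ a : (Fin t' × (Fin t × Bool)) × (Fin t' × (Fin t × Bool)), G (φ a) := by
        have f1 : (∑ a : (Fin t' × (Fin t × Bool)) × (Fin t' × (Fin t × Bool)), G (φ a))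
            = ∑ w1 : Fin t' × (Fin t × Bool), ∑ w2 : Fin t' × (Fin t × Bool), G (φ (w1, w2)) :=
          Fintype.sum_prod_type _
        have f2 : ∀ h : Fin t' × (Fin t × Bool) → ℝ, (∑ w : Fin t' × (Fin t × Bool), h w)
            = ∑ i : Fin t', ∑ u : Fin t × Bool, h (i, u) := fun h => Fintype.sum_prod_type _
        rw [f1, f2]
        refine Finset.sum_congr rfl fun i _ => ?_
        have hsc : (∑ j : Fin t', ∑ u : Fin t × Bool, ∑ v : Fin t × Bool,
            mP R (u.1, i, true, u.2) * mP R (v.1, j, v.2, true) *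
              |cP U R (u.1, i, true, u.2) (v.1, j, v.2, true) - cP U P u.1 v.1|)
            = ∑ u : Fin t × Bool, ∑ j : Fin t', ∑ v : Fin t × Bool,
            mP R (u.1, i, true, u.2) * mP R (v.1, j, v.2, true) *
              |cP U R (u.1, i, true, u.2) (v.1, j, v.2, true) - cP U P u.1 v.1| :=
          Finset.sum_comm
        rw [hsc]
        refine Finset.sum_congr rfl fun u _ => ?_
        rw [f2]
    _ ≤ ∑ v, G v := sum_le_of_inj φ hφinj G hGnn
    _ = ∑ z : Fin t × Fin t' × Bool × Bool, ∑ z' : Fin t × Fin t' × Bool × Bool,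
        mP R z * mP R z' * |cP U R z z' - cP U P z.1 z'.1| := by
        rw [Fintype.sum_prod_type]

lemma energy_increment {k : ℕ} {W : Fin k → Fin k → ℝ → ℝ → ℝ} (hW : IsColoredDigraphon k W)
    (hP : IsPartition P) (hQ : IsPartition Q)
    (hS : ∀ i, MeasurableSet (S i) ∧ S i ⊆ Q i)
    (hT : ∀ i, MeasurableSet (T i) ∧ T i ⊆ Q i) (α₀ β₀ : Fin k) :
    (∑ i, ∑ j, |∫ x in S i, ∫ y in T j, (W α₀ β₀ x y - avgP P (W α₀ β₀) x y)|)^2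
      + Energy W P ≤ Energy W (Ref P Q S T) := by
  set R := Ref P Q S T with hRdef
  have hR : IsPartition R := Ref_isPartition hP hQ hS hT
  have hdiff : ∀ α β : Fin k,
      l2sq (avgP P (W α β)) ≤ l2sq (avgP R (W α β)) := by
    intro α β
    have h := energy_diff (g := Prod.fst) (Ker_of hW α β) hP hR (fun z => Ref_subset_P z)
    have hnn : 0 ≤ ∑ z, ∑ z', mP R z * mP R z' *
        (cP (W α β) R z z' - cP (W α β) P z.1 z'.1)^2 :=
      Finset.sum_nonneg fun z _ => Finset.sum_nonneg fun z' _ =>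
        mul_nonneg (mul_nonneg (mP_nonneg _ _) (mP_nonneg _ _)) (sq_nonneg _)
    linarith [h, hnn]
  have hmain : (∑ i, ∑ j, |∫ x in S i, ∫ y in T j,
        (W α₀ β₀ x y - avgP P (W α₀ β₀) x y)|)^2
      ≤ l2sq (avgP R (W α₀ β₀)) - l2sq (avgP P (W α₀ β₀)) := by
    have h1 := key_cut (Ker_of hW α₀ β₀) hP hQ hS hT
    have h2 := cs_ineq hR (fun z z' => cP (W α₀ β₀) R z z' - cP (W α₀ β₀) P z.1 z'.1)
    have h3 := energy_diff (g := Prod.fst) (Ker_of hW α₀ β₀) hP hR (fun z => Ref_subset_P z)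
    have hδnn : 0 ≤ ∑ i, ∑ j, |∫ x in S i, ∫ y in T j,
        (W α₀ β₀ x y - avgP P (W α₀ β₀) x y)| :=
      Finset.sum_nonneg fun i _ => Finset.sum_nonneg fun j _ => abs_nonneg _
    calc (∑ i, ∑ j, |∫ x in S i, ∫ y in T j, (W α₀ β₀ x y - avgP P (W α₀ β₀) x y)|)^2
        ≤ (∑ z, ∑ z', mP R z * mP R z' *
            |cP (W α₀ β₀) R z z' - cP (W α₀ β₀) P z.1 z'.1|)^2 := by
          apply pow_le_pow_left₀ hδnn h1
      _ ≤ ∑ z, ∑ z', mP R z * mP R z' *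
            (cP (W α₀ β₀) R z z' - cP (W α₀ β₀) P z.1 z'.1)^2 := h2
      _ = l2sq (avgP R (W α₀ β₀)) - l2sq (avgP P (W α₀ β₀)) := h3
  unfold Energy
  have hsum : l2sq (avgP R (W α₀ β₀)) - l2sq (avgP P (W α₀ β₀))
      ≤ ∑ α, ∑ β, (l2sq (avgP R (W α β)) - l2sq (avgP P (W α β))) := by
    have h1 : ∀ α, (0:ℝ) ≤ ∑ β, (l2sq (avgP R (W α β)) - l2sq (avgP P (W α β))) :=
      fun α => Finset.sum_nonneg fun β _ => sub_nonneg.2 (hdiff α β)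
    have h2 : (∑ β, (l2sq (avgP R (W α₀ β)) - l2sq (avgP P (W α₀ β))))
        ≤ ∑ α, ∑ β, (l2sq (avgP R (W α β)) - l2sq (avgP P (W α β))) :=
      Finset.single_le_sum (f := fun α => ∑ β, (l2sq (avgP R (W α β)) - l2sq (avgP P (W α β))))
        (fun α _ => h1 α) (Finset.mem_univ α₀)
    have h3 : l2sq (avgP R (W α₀ β₀)) - l2sq (avgP P (W α₀ β₀))
        ≤ ∑ β, (l2sq (avgP R (W α₀ β)) - l2sq (avgP P (W α₀ β))) :=
      Finset.single_le_sum (f := fun β => l2sq (avgP R (W α₀ β)) - l2sq (avgP P (W α₀ β)))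
        (fun β _ => sub_nonneg.2 (hdiff α₀ β)) (Finset.mem_univ β₀)
    linarith
  have hsplit : (∑ α, ∑ β, (l2sq (avgP R (W α β)) - l2sq (avgP P (W α β))))
      = (∑ α, ∑ β, l2sq (avgP R (W α β))) - ∑ α, ∑ β, l2sq (avgP P (W α β)) := by
    rw [← Finset.sum_sub_distrib]
    exact Finset.sum_congr rfl fun α _ => by rw [← Finset.sum_sub_distrib]
  linarith [hmain, hsum, hsplit]

end Refinement

section Main

def MM (m₀ : ℕ) : ℕ → ℕ
  | 0 => 1
  | n+1 => 4 * m₀ * MM m₀ n * MM m₀ n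

def EnergySet {k : ℕ} (W : Fin k → Fin k → ℝ → ℝ → ℝ) (m : ℕ) : Set ℝ :=
  { e | ∃ t, t ≤ m ∧ ∃ P : Fin t → Set ℝ, IsPartition P ∧ e = Energy W P }

def ES {k : ℕ} (W : Fin k → Fin k → ℝ → ℝ → ℝ) (m₀ n : ℕ) : ℝ :=
  sSup (EnergySet W (MM m₀ n))

lemma trivP_isPartition : IsPartition (fun _ : Fin 1 => I01) := by
  refine ⟨fun _ => measI, fun _ => subset_rfl, ?_, ?_⟩
  · intro i j hij
    exact absurd (Subsingleton.elim i j) hij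
  · simp [iUnion_const]

lemma one_le_MM (m₀ : ℕ) (hm : 1 ≤ m₀) (n : ℕ) : 1 ≤ MM m₀ n := by
  induction n with
  | zero => exact le_refl 1
  | succ n ih =>
    show 1 ≤ 4 * m₀ * MM m₀ n * MM m₀ n
    have h : 1 * 1 * 1 ≤ 4 * m₀ * MM m₀ n * MM m₀ n :=
      Nat.mul_le_mul (Nat.mul_le_mul (by omega) ih) ih
    simpa using h

lemma MM_le (m₀ : ℕ) (hm : 1 ≤ m₀) (n : ℕ) : MM m₀ n ≤ (4*m₀)^(2^n - 1) := by
  induction n with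
  | zero => simp [MM]
  | succ n ih =>
    have h1 : 1 ≤ 2^n := Nat.one_le_two_pow
    have hexp : 1 + (2^n - 1) + (2^n - 1) = 2^(n+1) - 1 := by
      have : 2^(n+1) = 2^n + 2^n := by rw [pow_succ]; omega
      omega
    calc MM m₀ (n+1) = 4 * m₀ * MM m₀ n * MM m₀ n := rfl
      _ ≤ (4*m₀) * (4*m₀)^(2^n - 1) * (4*m₀)^(2^n - 1) :=
          Nat.mul_le_mul (Nat.mul_le_mul (le_refl (4*m₀)) ih) ih
      _ = (4*m₀)^(1 + (2^n - 1) + (2^n - 1)) := by rw [pow_add, pow_add, pow_one]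
      _ = (4*m₀)^(2^(n+1) - 1) := by rw [hexp]

lemma MM_le4 (m₀ : ℕ) (hm : 1 ≤ m₀) (n : ℕ) : 4 * MM m₀ n ≤ (16*m₀)^(2^n) := by
  have h1 : 1 ≤ 2^n := Nat.one_le_two_pow
  calc 4 * MM m₀ n ≤ 4 * (4*m₀)^(2^n - 1) := Nat.mul_le_mul_left 4 (MM_le m₀ hm n)
    _ ≤ (16*m₀) * (16*m₀)^(2^n - 1) := by
        refine Nat.mul_le_mul (by omega) (Nat.pow_le_pow_left (by omega) _)
    _ = (16*m₀)^(1 + (2^n - 1)) := by rw [pow_add, pow_one]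
    _ = (16*m₀)^(2^n) := by congr 1; omega

lemma EnergySet_nonempty {k : ℕ} (W : Fin k → Fin k → ℝ → ℝ → ℝ) {m : ℕ} (hm1 : 1 ≤ m) :
    (EnergySet W m).Nonempty :=
  ⟨Energy W (fun _ : Fin 1 => I01), 1, hm1, _, trivP_isPartition, rfl⟩

lemma EnergySet_bdd {k : ℕ} {W : Fin k → Fin k → ℝ → ℝ → ℝ} (hW : IsColoredDigraphon k W)
    (m : ℕ) : BddAbove (EnergySet W m) := by
  refine ⟨1, fun e he => ?_⟩
  obtain ⟨t, _, P, hP, rfl⟩ := he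
  exact energy_le_one hW hP

lemma ES_nonneg {k : ℕ} {W : Fin k → Fin k → ℝ → ℝ → ℝ} (hW : IsColoredDigraphon k W)
    {m₀ : ℕ} (hm : 1 ≤ m₀) (n : ℕ) : 0 ≤ ES W m₀ n :=
  le_trans (energy_nonneg hW trivP_isPartition)
    (le_csSup (EnergySet_bdd hW _) ⟨1, one_le_MM m₀ hm n, _, trivP_isPartition, rfl⟩)

lemma ES_le_one {k : ℕ} {W : Fin k → Fin k → ℝ → ℝ → ℝ} (hW : IsColoredDigraphon k W)
    {m₀ : ℕ} (hm : 1 ≤ m₀) (n : ℕ) : ES W m₀ n ≤ 1 := by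
  refine csSup_le (EnergySet_nonempty W (one_le_MM m₀ hm n)) fun e he => ?_
  obtain ⟨t, _, P, hP, rfl⟩ := he
  exact energy_le_one hW hP

lemma pigeon (f : ℕ → ℝ) (h0 : 0 ≤ f 0) (h1 : ∀ n, f n ≤ 1) (N : ℕ) :
    ∃ n, n ≤ N ∧ f (n+1) ≤ f n + 1/((N:ℝ)+1) := by
  by_contra hcon
  push_neg at hcon
  have key : ∀ j, j ≤ N → ((j:ℝ)+1) * (1/((N:ℝ)+1)) < f (j+1) := by
    intro j
    induction j with
    | zero =>
      intro _
      have h2 := hcon 0 (Nat.zero_le N)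
      have he : (((0:ℕ):ℝ)+1) * (1/((N:ℝ)+1)) = 1/((N:ℝ)+1) := by norm_num
      rw [he]
      linarith
    | succ j ih =>
      intro hj
      have hj' : j ≤ N := Nat.le_of_succ_le hj
      have h2 := hcon (j+1) hj
      have h3 := ih hj'
      have hc : ((j:ℝ)+1+1) * (1/((N:ℝ)+1)) = ((j:ℝ)+1) * (1/((N:ℝ)+1)) + 1/((N:ℝ)+1) := by
        ring
      push_cast
      push_cast at h2 h3
      linarith [hc]
  have hN := key N (le_refl N)
  have heq : ((N:ℝ)+1) * (1/((N:ℝ)+1)) = 1 := by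
    field_simp
  linarith [h1 (N+1), hN]

lemma cutPNorm_extract {t' : ℕ} {Q : Fin t' → Set ℝ} {U : ℝ → ℝ → ℝ} {c : ℝ}
    (h : c < cutPNorm Q U) :
    ∃ S T : Fin t' → Set ℝ,
      (∀ i, MeasurableSet (S i) ∧ MeasurableSet (T i) ∧ S i ⊆ Q i ∧ T i ⊆ Q i) ∧
      c < ∑ i, ∑ j, |∫ x in S i, ∫ y in T j, U x y| := by
  have hne : { r | ∃ S T : Fin t' → Set ℝ,
      (∀ i, MeasurableSet (S i) ∧ MeasurableSet (T i) ∧ S i ⊆ Q i ∧ T i ⊆ Q i) ∧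
      r = ∑ i, ∑ j, |∫ x in S i, ∫ y in T j, U x y| }.Nonempty := by
    refine ⟨0, fun _ => ∅, fun _ => ∅, fun i =>
      ⟨MeasurableSet.empty, MeasurableSet.empty, empty_subset _, empty_subset _⟩, ?_⟩
    simp
  obtain ⟨r, ⟨S, T, hST, rfl⟩, hr⟩ := exists_lt_of_lt_csSup hne h
  exact ⟨S, T, hST, hr⟩

end Main

end IReg

open IReg in
theorem intermediate_regularity {k : ℕ} (ε : ℝ) (hε : 0 < ε) (m₀ : ℕ) (hm : 1 ≤ m₀)
    (hk : 1 ≤ k) (W : Fin k → Fin k → ℝ → ℝ → ℝ) (hW : IsColoredDigraphon k W) :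
    ∃ (t : ℕ) (P : Fin t → Set ℝ), IsPartition P ∧
      (t : ℝ) ≤ (16 * m₀ : ℝ) ^ ((2:ℝ) ^ ((k:ℝ) ^ 4 / ε ^ 2)) / 4 ∧
      ∀ (t' : ℕ), t' ≤ max t m₀ → ∀ Q : Fin t' → Set ℝ, IsPartition Q →
        ∑ α, ∑ β, cutPNorm Q (fun x y => W α β x y - avgP P (W α β) x y) ≤ ε := by
  classical
  have hk' : (0:ℝ) < (k:ℝ) := by exact_mod_cast hk
  have hk2 : (0:ℝ) < (k:ℝ)^2 := by positivity
  have hk4 : (0:ℝ) < (k:ℝ)^4 := by positivity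
  set s : ℝ := (k:ℝ)^4 / ε^2 with hsdef
  have hspos : 0 < s := div_pos hk4 (by positivity)
  set N : ℕ := ⌊s⌋₊ with hNdef
  set η : ℝ := 1/((N:ℝ)+1) with hηdef
  have hηpos : 0 < η := by positivity
  have hηlt : η < ε^2/(k:ℝ)^4 := by
    have h1 : s < (N:ℝ)+1 := Nat.lt_floor_add_one s
    have h2 : ε^2/(k:ℝ)^4 = 1/s := by rw [hsdef, one_div_div]
    rw [h2, hηdef]
    exact one_div_lt_one_div_of_lt hspos h1
  obtain ⟨n, hnN, hgood⟩ := pigeon (fun n => ES W m₀ n)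
    (ES_nonneg hW hm 0) (fun n => ES_le_one hW hm n) N
  have hgood' : ES W m₀ (n+1) ≤ ES W m₀ n + η := hgood
  set δ' : ℝ := (ε^2/(k:ℝ)^4 - η)/2 with hδ'def
  have hδ'pos : 0 < δ' := by rw [hδ'def]; linarith
  have hlt : ES W m₀ n - δ' < sSup (EnergySet W (MM m₀ n)) := by
    have : ES W m₀ n - δ' < ES W m₀ n := by linarith
    exact this
  obtain ⟨e, he, hegt⟩ := exists_lt_of_lt_csSup
    (EnergySet_nonempty W (one_le_MM m₀ hm n)) hlt
  obtain ⟨t, htM, P, hP, rfl⟩ := he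
  have ht1 : 1 ≤ t := by
    rcases Nat.eq_zero_or_pos t with h0 | h1
    · exfalso
      have hmem : (0:ℝ) ∈ I01 := ⟨le_refl 0, zero_le_one⟩
      rw [← hP.2.2.2] at hmem
      obtain ⟨_, ⟨i, _⟩, _⟩ := hmem
      subst h0
      exact i.elim0
    · exact h1
  refine ⟨t, P, hP, ?_, ?_⟩
  · have h5 : (4 * t : ℕ) ≤ (16*m₀)^(2^n) :=
      le_trans (Nat.mul_le_mul_left 4 htM) (MM_le4 m₀ hm n)
    have h5' : 4 * (t:ℝ) ≤ (16*(m₀:ℝ))^(2^n : ℕ) := by exact_mod_cast h5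
    have h6 : (16*(m₀:ℝ))^(2^n : ℕ) ≤ (16 * (m₀:ℝ)) ^ ((2:ℝ) ^ s) := by
      rw [← Real.rpow_natCast (16*(m₀:ℝ)) (2^n)]
      have hb : (1:ℝ) ≤ 16*(m₀:ℝ) := by
        have h7 : (1:ℝ) ≤ (m₀:ℝ) := by exact_mod_cast hm
        nlinarith
      apply Real.rpow_le_rpow_of_exponent_le hb
      have e1 : ((2^n : ℕ) : ℝ) = (2:ℝ)^(n:ℕ) := by push_cast; ring
      rw [e1, ← Real.rpow_natCast 2 n]
      apply Real.rpow_le_rpow_of_exponent_le one_le_two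
      calc (n:ℝ) ≤ (N:ℝ) := by exact_mod_cast hnN
        _ ≤ s := Nat.floor_le hspos.le
    linarith
  · intro t' ht' Q hQ
    by_contra hcon
    push_neg at hcon
    have hpair : ∃ α₀ β₀ : Fin k, ε/(k:ℝ)^2 <
        cutPNorm Q (fun x y => W α₀ β₀ x y - avgP P (W α₀ β₀) x y) := by
      by_contra hno
      push_neg at hno
      have hb : (∑ α, ∑ β, cutPNorm Q (fun x y => W α β x y - avgP P (W α β) x y))
          ≤ ∑ _α : Fin k, ∑ _β : Fin k, ε/(k:ℝ)^2 :=
        Finset.sum_le_sum fun α _ => Finset.sum_le_sum fun β _ => hno α β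
      have hc : (∑ _α : Fin k, ∑ _β : Fin k, ε/(k:ℝ)^2) = ε := by
        rw [Finset.sum_const, Finset.sum_const]
        simp only [Finset.card_univ, Fintype.card_fin, nsmul_eq_mul]
        field_simp
      rw [hc] at hb
      linarith
    obtain ⟨α₀, β₀, hα⟩ := hpair
    obtain ⟨S, T, hST, hr⟩ := cutPNorm_extract hα
    have hS : ∀ i, MeasurableSet (S i) ∧ S i ⊆ Q i := fun i => ⟨(hST i).1, (hST i).2.2.1⟩
    have hT : ∀ i, MeasurableSet (T i) ∧ T i ⊆ Q i := fun i => ⟨(hST i).2.1, (hST i).2.2.2⟩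
    have hinc := energy_increment hW hP hQ hS hT α₀ β₀
    have hδsq : ε^2/(k:ℝ)^4 < (∑ i, ∑ j, |∫ x in S i, ∫ y in T j,
        (W α₀ β₀ x y - avgP P (W α₀ β₀) x y)|)^2 := by
      have h0 : 0 ≤ ε/(k:ℝ)^2 := by positivity
      have heq : (ε/(k:ℝ)^2)^2 = ε^2/(k:ℝ)^4 := by
        rw [div_pow, ← pow_mul]
      rw [← heq]
      exact pow_lt_pow_left₀ hr h0 two_ne_zero
    have hR : IsPartition (Ref P Q S T) := Ref_isPartition hP hQ hS hT
    have hcval : Fintype.card (Fin t × Fin t' × Bool × Bool) = t * (t' * (2 * 2)) := by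
      simp
    have ht'le : t' ≤ t * m₀ := by
      refine le_trans ht' (max_le ?_ ?_)
      · calc t = t * 1 := (mul_one t).symm
          _ ≤ t * m₀ := Nat.mul_le_mul_left t hm
      · calc m₀ = 1 * m₀ := (one_mul m₀).symm
          _ ≤ t * m₀ := Nat.mul_le_mul_right m₀ ht1
    have hcle : Fintype.card (Fin t × Fin t' × Bool × Bool) ≤ MM m₀ (n+1) := by
      rw [hcval]
      calc t * (t' * (2*2)) ≤ MM m₀ n * ((MM m₀ n * m₀) * 4) :=
            Nat.mul_le_mul htM (Nat.mul_le_mul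
              (le_trans ht'le (Nat.mul_le_mul_right m₀ htM)) (by norm_num))
        _ = 4 * m₀ * MM m₀ n * MM m₀ n := by ring
        _ = MM m₀ (n+1) := rfl
    have hmem : Energy W (Ref P Q S T) ∈ EnergySet W (MM m₀ (n+1)) := by
      refine ⟨Fintype.card (Fin t × Fin t' × Bool × Bool), hcle,
        Ref P Q S T ∘ (Fintype.equivFin (Fin t × Fin t' × Bool × Bool)).symm,
        IsPartition_reindex _ hR, ?_⟩
      rw [Energy_reindex]
    have hES1 : Energy W (Ref P Q S T) ≤ ES W m₀ (n+1) :=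
      le_csSup (EnergySet_bdd hW _) hmem
    linarith
end
end
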